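/- arXiv:2209.01328 — 4 statements merged into one kernel-verified Lean document; each statement's English description precedes it below -/
import Mathlib

section
/- Let φ(θ) = Σ_{i=1}^m β_i θ^{y_i} − e^θ where β_i ∈ ℝ and y_1 < ... < y_m are distinct nonnegative integers, and suppose φ(θ) ≤ 0 for all θ ∈ [0,h] with h > 0. Then the equation φ(θ) = 0 has at most m solutions in [0,h]. -/
open Real Finset Polynomial

/-- Rolle for finsets of zeros: produce `card - 1` new points where the derivative vanishes,
strictly between points of `T` and not in `T`. -/
lemma rolle_finset : ∀ (n : ℕ) (f : ℝ → ℝ), Differentiable ℝ f →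
    ∀ T : Finset ℝ, T.card = n → T.Nonempty → (∀ x ∈ T, f x = 0) →
    ∃ T' : Finset ℝ, T'.card + 1 = T.card ∧
      ∀ x ∈ T', deriv f x = 0 ∧ x ∉ T ∧ ∃ a ∈ T, ∃ b ∈ T, a < x ∧ x < b := by
  intro n
  induction n with
  | zero => intro f hf T hT hne _; exact absurd (Finset.card_pos.mpr hne) (by omega)
  | succ n ih =>
    intro f hf T hT hne hz
    rcases Nat.eq_zero_or_pos n with hn | hn
    · exact ⟨∅, by simp [hT, hn], by simp⟩
    · set b := T.max' hne with hb
      have hbT : b ∈ T := T.max'_mem hne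
      set T₀ := T.erase b with hT₀
      have hT₀card : T₀.card = n := by rw [hT₀, Finset.card_erase_of_mem hbT, hT]; omega
      have hT₀ne : T₀.Nonempty := Finset.card_pos.mp (by omega)
      set a := T₀.max' hT₀ne with ha
      have haT₀ : a ∈ T₀ := T₀.max'_mem hT₀ne
      have haT : a ∈ T := Finset.mem_of_mem_erase haT₀
      have hab : a < b := lt_of_le_of_ne (T.le_max' a haT) (Finset.ne_of_mem_erase haT₀)
      -- all elements of T other than b are ≤ a
      have hle : ∀ s ∈ T, s ≠ b → s ≤ a := fun s hs hsb =>
        T₀.le_max' s (Finset.mem_erase.mpr ⟨hsb, hs⟩)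
      obtain ⟨c, hc, hdc⟩ := exists_deriv_eq_zero hab (hf.continuous.continuousOn)
        (by rw [hz a haT, hz b hbT])
      obtain ⟨T₀', hcard, hprop⟩ := ih f hf T₀ hT₀card hT₀ne
        (fun x hx => hz x (Finset.mem_of_mem_erase hx))
      refine ⟨insert c T₀', ?_, ?_⟩
      · have hcT₀' : c ∉ T₀' := by
          intro hcmem
          obtain ⟨-, -, a', -, b', hb', -, hxb⟩ := hprop c hcmem
          have : b' ≤ a := T₀.le_max' b' hb'
          linarith [hc.1]
        rw [Finset.card_insert_of_notMem hcT₀', hcard, hT₀card, hT]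
      · intro x hx
        rcases Finset.mem_insert.mp hx with rfl | hx
        · refine ⟨hdc, ?_, a, haT, b, hbT, hc.1, hc.2⟩
          intro hxT
          rcases eq_or_ne x b with rfl | hxb
          · exact absurd hc.2 (lt_irrefl _)
          · exact absurd (hle x hxT hxb) (not_le.mpr hc.1)
        · obtain ⟨hd, hnot, a', ha', b', hb', hlt1, hlt2⟩ := hprop x hx
          refine ⟨hd, ?_, a', Finset.mem_of_mem_erase ha', b', Finset.mem_of_mem_erase hb',
            hlt1, hlt2⟩
          intro hxT
          rcases eq_or_ne x b with rfl | hxb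
          · have : b' ≤ a := T₀.le_max' b' hb'
            linarith
          · exact hnot (Finset.mem_erase.mpr ⟨hxb, hxT⟩)

lemma support_divX_card {P : Polynomial ℝ} (h0 : P.coeff 0 = 0) :
    (P.divX).support.card = P.support.card := by
  have himg : (P.divX).support.image (· + 1) = P.support := by
    ext n
    simp only [Finset.mem_image, mem_support_iff, coeff_divX]
    constructor
    · rintro ⟨k, hk, rfl⟩; exact hk
    · intro hn
      rcases n with _ | k
      · exact absurd h0 hn
      · exact ⟨k, hn, rfl⟩
  rw [← himg, Finset.card_image_of_injective _ (add_left_injective 1)]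

lemma support_derivative_card {P : Polynomial ℝ} (h0 : P.coeff 0 ≠ 0) :
    (Polynomial.derivative P).support.card + 1 ≤ P.support.card := by
  have hsub : (Polynomial.derivative P).support.image (· + 1) ⊆ P.support.erase 0 := by
    intro n hn
    obtain ⟨k, hk, rfl⟩ := Finset.mem_image.mp hn
    rw [Polynomial.mem_support_derivative] at hk
    exact Finset.mem_erase.mpr ⟨Nat.succ_ne_zero k, hk⟩
  have h0mem : (0 : ℕ) ∈ P.support := mem_support_iff.mpr h0
  calc (Polynomial.derivative P).support.card + 1
      = ((Polynomial.derivative P).support.image (· + 1)).card + 1 := by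
        rw [Finset.card_image_of_injective _ (add_left_injective 1)]
    _ ≤ (P.support.erase 0).card + 1 := by
        exact Nat.add_le_add_right (Finset.card_le_card hsub) 1
    _ = P.support.card := by
        rw [Finset.card_erase_of_mem h0mem]
        have := Finset.card_pos.mpr ⟨(0:ℕ), h0mem⟩
        omega

/-- A nonzero real polynomial has fewer distinct positive roots than monomials. -/
lemma descartes_lite : ∀ (n : ℕ) (P : Polynomial ℝ), P ≠ 0 → P.natDegree ≤ n →
    ∀ T : Finset ℝ, (∀ x ∈ T, 0 < x ∧ Polynomial.eval x P = 0) → T.card < P.support.card := by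
  intro n
  induction n with
  | zero =>
    intro P hP hdeg T hT
    have hsupp : 0 < P.support.card := Finset.card_pos.mpr (nonempty_support_iff.mpr hP)
    rcases T.eq_empty_or_nonempty with rfl | ⟨x, hx⟩
    · simpa using hsupp
    · obtain ⟨hxpos, hxz⟩ := hT x hx
      have hPC : P = C (P.coeff 0) := eq_C_of_natDegree_eq_zero (Nat.le_zero.mp hdeg)
      rw [hPC] at hxz
      simp at hxz
      exact absurd (hPC.trans (by rw [hxz, map_zero])) hP
  | succ n ih =>
    intro P hP hdeg T hT
    have hsupp : 0 < P.support.card := Finset.card_pos.mpr (nonempty_support_iff.mpr hP)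
    rcases T.eq_empty_or_nonempty with rfl | hne
    · simpa using hsupp
    by_cases h0 : P.coeff 0 = 0
    · -- divide by X
      have hPX : P.divX * X = P := by
        have := P.divX_mul_X_add; rw [h0, map_zero, add_zero] at this; exact this
      have hdivne : P.divX ≠ 0 := fun hd => hP (by rw [← hPX, hd, zero_mul])
      have hdivdeg : P.divX.natDegree ≤ n := by
        have := P.natDegree_divX_eq_natDegree_tsub_one
        omega
      have := ih P.divX hdivne hdivdeg T (fun x hx => by
        obtain ⟨hxpos, hxz⟩ := hT x hx
        refine ⟨hxpos, ?_⟩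
        rw [← hPX, eval_mul, eval_X] at hxz
        exact (mul_eq_zero.mp hxz).resolve_right (ne_of_gt hxpos))
      rwa [support_divX_card h0] at this
    · -- use derivative
      have hdiff : Differentiable ℝ (fun x => Polynomial.eval x P) :=
        fun x => (P.hasDerivAt x).differentiableAt
      obtain ⟨T', hcard, hprop⟩ := rolle_finset T.card (fun x => Polynomial.eval x P) hdiff T
        rfl hne (fun x hx => (hT x hx).2)
      have hdeg0 : P.natDegree ≠ 0 := by
        intro hd0
        have hPC : P = C (P.coeff 0) := eq_C_of_natDegree_eq_zero hd0
        obtain ⟨x, hx⟩ := hne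
        obtain ⟨-, hxz⟩ := hT x hx
        rw [hPC] at hxz; simp at hxz; exact h0 hxz
      have hd'ne : Polynomial.derivative P ≠ 0 := by
        intro hd
        exact hdeg0 (natDegree_eq_zero_of_derivative_eq_zero hd)
      have hd'deg : (Polynomial.derivative P).natDegree ≤ n := by
        have := natDegree_derivative_lt hdeg0
        omega
      have hT' : ∀ x ∈ T', 0 < x ∧ Polynomial.eval x (Polynomial.derivative P) = 0 := by
        intro x hx
        obtain ⟨hd, -, a, haT, -, -, hax, -⟩ := hprop x hx
        refine ⟨lt_of_le_of_lt (hT a haT).1.le hax, ?_⟩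
        rw [← Polynomial.deriv]; exact hd
      have := ih (Polynomial.derivative P) hd'ne hd'deg T' hT'
      have := support_derivative_card h0
      omega
lemma poly_support_sum {ι : Type*} (s : Finset ι) (f : ι → Polynomial ℝ) :
    (∑ i ∈ s, f i).support ⊆ s.biUnion fun i => (f i).support := by
  classical
  induction s using Finset.induction_on with
  | empty => simp
  | insert _ _ hx ih =>
    rw [Finset.sum_insert hx, Finset.biUnion_insert]
    exact Polynomial.support_add.trans (Finset.union_subset_union le_rfl ih)

/-- if `φ(θ) = ∑ i, β i * θ^(y i) − e^θ` is nonpositive on `[0,h]`,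
then `φ` has at most `m` zeros in `[0,h]`. -/
theorem zeros_of_polynomial_minus_exp (m : ℕ) (hm : 1 ≤ m) (β : Fin m → ℝ)
    (y : Fin m → ℕ) (hy : Function.Injective y) (h : ℝ) (hh : 0 < h)
    (φ : ℝ → ℝ) (hφ : ∀ θ, φ θ = (∑ i : Fin m, β i * θ ^ (y i)) - Real.exp θ)
    (hnonpos : ∀ θ ∈ Set.Icc (0:ℝ) h, φ θ ≤ 0) :
    {θ ∈ Set.Icc (0:ℝ) h | φ θ = 0}.Finite ∧
      {θ ∈ Set.Icc (0:ℝ) h | φ θ = 0}.ncard ≤ m := by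
  classical
  set P : Polynomial ℝ := ∑ i : Fin m, Polynomial.C (β i) * Polynomial.X ^ (y i) with hP
  have heval : ∀ θ : ℝ, P.eval θ = ∑ i : Fin m, β i * θ ^ (y i) := by
    intro θ; simp [hP, Polynomial.eval_finset_sum]
  set g : ℝ → ℝ := fun θ => P.eval θ * Real.exp (-θ) - 1 with hgdef
  have hg : ∀ θ, g θ = Real.exp (-θ) * φ θ := by
    intro θ
    have hexp : Real.exp (-θ) * Real.exp θ = 1 := by
      rw [← Real.exp_add]; simp
    simp only [hgdef, hφ, heval]
    ring_nf
    have hs : ∑ x : Fin m, θ ^ y x * β x = ∑ x : Fin m, β x * θ ^ y x :=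
      Finset.sum_congr rfl (fun i _ => mul_comm _ _)
    rw [hs]; linear_combination hexp
  have hgz : ∀ θ, φ θ = 0 → g θ = 0 := fun θ hθ => by rw [hg, hθ, mul_zero]
  set Q : Polynomial ℝ := Polynomial.derivative P - P with hQ
  have hderiv : ∀ θ : ℝ, HasDerivAt g (Q.eval θ * Real.exp (-θ)) θ := by
    intro θ
    have h1 : HasDerivAt (fun θ : ℝ => Real.exp (-θ)) (-Real.exp (-θ)) θ := by
      simpa using (hasDerivAt_neg θ).exp
    have h2 := ((P.hasDerivAt θ).mul h1).sub_const 1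
    refine h2.congr_deriv ?_
    rw [hQ]
    simp [Polynomial.eval_sub]
    ring
  have hgdiff : Differentiable ℝ g := fun θ => (hderiv θ).differentiableAt
  have hgle : ∀ θ ∈ Set.Icc (0:ℝ) h, g θ ≤ 0 := by
    intro θ hθ
    rw [hg]
    exact mul_nonpos_of_nonneg_of_nonpos (Real.exp_nonneg _) (hnonpos θ hθ)
  -- Key claim: any finset of zeros has cardinality ≤ m
  have claim : ∀ S : Finset ℝ, (∀ x ∈ S, x ∈ Set.Icc (0:ℝ) h ∧ φ x = 0) → S.card ≤ m := by
    intro S hS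
    by_contra hlt
    push_neg at hlt
    have hk2 : 2 ≤ S.card := by omega
    have hne : S.Nonempty := Finset.card_pos.mp (by omega)
    have hSz : ∀ x ∈ S, g x = 0 := fun x hx => hgz x (hS x hx).2
    -- Q ≠ 0
    have hPne : P ≠ 0 := by
      intro hP0
      obtain ⟨x, hx⟩ := hne
      have := hSz x hx
      rw [hgdef] at this
      simp only [hP0, Polynomial.eval_zero, zero_mul, zero_sub] at this
      norm_num at this
    have hQne : Q ≠ 0 := by
      intro hQ0
      rw [hQ, sub_eq_zero] at hQ0
      rcases eq_or_ne P.natDegree 0 with hd | hd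
      · have hPC : P = Polynomial.C (P.coeff 0) := Polynomial.eq_C_of_natDegree_eq_zero hd
        have hzero : Polynomial.derivative P = 0 := by rw [hPC]; simp
        rw [hQ0] at hzero
        exact hPne hzero
      · have h1 := Polynomial.natDegree_derivative_lt hd
        rw [hQ0] at h1
        exact absurd h1 (lt_irrefl _)
    -- Rolle points
    obtain ⟨T1, hT1card, hT1prop⟩ := rolle_finset S.card g hgdiff S rfl hne hSz
    -- interior maxima
    set T2 : Finset ℝ := S.filter (fun x => 0 < x ∧ x < h) with hT2
    have hT2sub : T2 ⊆ S := Finset.filter_subset _ _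
    have hT2deriv : ∀ x ∈ T2, deriv g x = 0 := by
      intro x hx
      rw [hT2, Finset.mem_filter] at hx
      obtain ⟨hxS, hx0, hxh⟩ := hx
      have hmax : IsLocalMax g x := by
        refine Filter.eventually_of_mem (Icc_mem_nhds hx0 hxh) (fun z hz => ?_)
        rw [hSz x hxS]
        exact hgle z hz
      exact hmax.deriv_eq_zero
    have hdisj : Disjoint T1 T2 := by
      rw [Finset.disjoint_left]
      intro x hx1 hx2
      exact (hT1prop x hx1).2.1 (hT2sub hx2)
    -- roots of Q
    have hQroot : ∀ x : ℝ, deriv g x = 0 → Q.eval x = 0 := by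
      intro x hx
      have := (hderiv x).deriv
      rw [hx] at this
      exact (mul_eq_zero.mp this.symm).resolve_right (Real.exp_ne_zero _)
    set T : Finset ℝ := T1 ∪ T2 with hT
    have hTroots : ∀ x ∈ T, 0 < x ∧ Polynomial.eval x Q = 0 := by
      intro x hx
      rcases Finset.mem_union.mp hx with hx1 | hx2
      · obtain ⟨hd, -, a, haS, -, -, hax, -⟩ := hT1prop x hx1
        exact ⟨lt_of_le_of_lt (hS a haS).1.1 hax, hQroot x hd⟩
      · have hx0 := (Finset.mem_filter.mp hx2).2.1
        exact ⟨hx0, hQroot x (hT2deriv x hx2)⟩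
    have hmain := descartes_lite Q.natDegree Q hQne le_rfl T hTroots
    have hTcard : T.card = T1.card + T2.card := Finset.card_union_of_disjoint hdisj
    -- support bound on Q
    set q : Fin m → Polynomial ℝ :=
      fun i => Polynomial.C (β i) * (Polynomial.derivative (Polynomial.X ^ (y i))
        - Polynomial.X ^ (y i)) with hq
    have hQsum : Q = ∑ i : Fin m, q i := by
      rw [hQ, hP, map_sum]
      rw [← Finset.sum_sub_distrib]
      congr 1
      funext i
      simp only [hq]
      rw [Polynomial.derivative_C_mul, mul_sub]
    have hqi : ∀ i, q i = Polynomial.C (β i * (y i : ℝ)) * Polynomial.X ^ (y i - 1)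
        - Polynomial.C (β i) * Polynomial.X ^ (y i) := by
      intro i
      simp only [hq]
      rw [Polynomial.derivative_X_pow, mul_sub, ← mul_assoc, ← Polynomial.C_mul]
    have hqsubset : ∀ i, (q i).support ⊆ ({y i - 1} : Finset ℕ) ∪ {y i} := by
      intro i
      rw [hqi i, sub_eq_add_neg]
      refine Polynomial.support_add.trans (Finset.union_subset_union ?_ ?_)
      · exact Polynomial.support_C_mul_X_pow' _ _
      · rw [Polynomial.support_neg]
        exact Polynomial.support_C_mul_X_pow' _ _
    have hqsupp : ∀ i, (q i).support.card ≤ 2 := by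
      intro i
      refine (Finset.card_le_card (hqsubset i)).trans ?_
      refine (Finset.card_union_le _ _).trans ?_
      simp
    have hqsupp0 : ∀ i, y i = 0 → (q i).support.card ≤ 1 := by
      intro i hi
      have hss := hqsubset i
      rw [hi] at hss
      simp only [Nat.zero_sub, Finset.union_idempotent, Finset.union_self] at hss
      exact (Finset.card_le_card hss).trans (by simp)
    have hQsupp : Q.support.card ≤ ∑ i : Fin m, (q i).support.card := by
      rw [hQsum]
      exact (Finset.card_le_card (poly_support_sum _ _)).trans (Finset.card_biUnion_le)
    -- cardinality of T2
    have hSfilter : S.filter (fun x => ¬(0 < x ∧ x < h)) ⊆ {0, h} := by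
      intro x hx
      rw [Finset.mem_filter] at hx
      obtain ⟨hxS, hxn⟩ := hx
      obtain ⟨⟨hx0, hxh⟩, -⟩ := hS x hxS
      push_neg at hxn
      rcases eq_or_lt_of_le hx0 with heq | hlt'
      · simp [← heq]
      · simp [le_antisymm hxh (hxn hlt')]
    have hT2card : S.card ≤ T2.card + (S.filter (fun x => ¬(0 < x ∧ x < h))).card := by
      rw [hT2]
      rw [← Finset.card_filter_add_card_filter_not (s := S)
        (p := fun x => 0 < x ∧ x < h)]
    by_cases h0S : (0:ℝ) ∈ S
    · -- there is an exponent equal to 0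
      have hy0 : ∃ i, y i = 0 := by
        by_contra hno
        push_neg at hno
        have := (hS 0 h0S).2
        rw [hφ] at this
        simp only [Real.exp_zero] at this
        have hzero : ∀ i : Fin m, β i * (0:ℝ) ^ (y i) = 0 := by
          intro i
          rw [zero_pow (hno i), mul_zero]
        rw [Finset.sum_congr rfl (fun i _ => hzero i)] at this
        simp at this
      obtain ⟨i0, hi0⟩ := hy0
      have hsum : ∑ i : Fin m, (q i).support.card ≤ 2 * m - 1 := by
        rw [← Finset.add_sum_erase _ _ (Finset.mem_univ i0)]
        have h1 : (q i0).support.card ≤ 1 := hqsupp0 i0 hi0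
        have h2 : ∑ i ∈ Finset.univ.erase i0, (q i).support.card ≤
            ∑ i ∈ Finset.univ.erase i0, 2 :=
          Finset.sum_le_sum (fun i _ => hqsupp i)
        rw [Finset.sum_const, smul_eq_mul, Finset.card_erase_of_mem (Finset.mem_univ i0),
          Finset.card_univ, Fintype.card_fin] at h2
        omega
      -- the non-interior points of S are among {0, h}
      have := Finset.card_le_card hSfilter
      simp only [Finset.card_insert_of_notMem, Finset.card_pair (ne_of_lt hh)] at this
      have hT2ge : S.card ≤ T2.card + 2 := by omega
      omega
    · have hfil : S.filter (fun x => ¬(0 < x ∧ x < h)) ⊆ {h} := by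
        intro x hx
        have hmem := hSfilter hx
        rcases Finset.mem_insert.mp hmem with rfl | hmem
        · exact absurd (Finset.mem_filter.mp hx).1 h0S
        · exact hmem
      have := Finset.card_le_card hfil
      simp only [Finset.card_singleton] at this
      have hT2ge : S.card ≤ T2.card + 1 := by omega
      have hsum : ∑ i : Fin m, (q i).support.card ≤ 2 * m := by
        calc ∑ i : Fin m, (q i).support.card ≤ ∑ _i : Fin m, 2 :=
              Finset.sum_le_sum (fun i _ => hqsupp i)
          _ = 2 * m := by simp [mul_comm]
      omega
  -- conclude
  have hfin : {θ ∈ Set.Icc (0:ℝ) h | φ θ = 0}.Finite := by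
    by_contra hinf
    have hinf2 : {θ ∈ Set.Icc (0:ℝ) h | φ θ = 0}.Infinite := hinf
    obtain ⟨t, hts, htfin, htcard⟩ := hinf2.exists_subset_ncard_eq (m + 1)
    have hFS : ∀ x ∈ htfin.toFinset, x ∈ Set.Icc (0:ℝ) h ∧ φ x = 0 := by
      intro x hx
      rw [Set.Finite.mem_toFinset] at hx
      exact hts hx
    have := claim htfin.toFinset hFS
    rw [Set.ncard_eq_toFinset_card _ htfin] at htcard
    omega
  refine ⟨hfin, ?_⟩
  rw [Set.ncard_eq_toFinset_card _ hfin]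
  exact claim hfin.toFinset (fun x hx => by
    rw [Set.Finite.mem_toFinset] at hx; exact hx)
end

section
/- Consider an entire function φ(x) = Σ_{j≥0} a_j x^j with real coefficients. The number of strictly positive zeros of φ counted with multiplicity is at most the number of sign changes in the coefficient sequence a_0, a_1, a_2, .... -/
open Real

/-- The set of sign changes of a real sequence: pairs `i < j` with `a i * a j < 0`
and all intermediate terms zero. -/
def signChangePairs (a : ℕ → ℝ) : Set (ℕ × ℕ) :=
  {p | p.1 < p.2 ∧ a p.1 * a p.2 < 0 ∧ ∀ k, p.1 < k → k < p.2 → a k = 0}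


lemma coeff_bound (a : ℕ → ℝ) (φ : ℝ → ℝ)
    (hconv : ∀ x : ℝ, HasSum (fun j => a j * x ^ j) (φ x)) (r : ℝ) :
    ∃ M : ℝ, 0 ≤ M ∧ ∀ j, |a j| * r ^ j ≤ M := by
  have h := (hconv r).summable.tendsto_atTop_zero
  have h2 : Filter.Tendsto (fun j => |a j * r ^ j|) Filter.atTop (nhds 0) := by
    simpa using h.abs
  obtain ⟨M, hM⟩ := h2.bddAbove_range
  refine ⟨M, le_trans (abs_nonneg _) (hM ⟨0, rfl⟩), fun j => ?_⟩
  have := hM ⟨j, rfl⟩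
  calc |a j| * r ^ j ≤ |a j| * |r ^ j| := by
        gcongr; exact le_abs_self _
    _ = |a j * r ^ j| := (abs_mul _ _).symm
    _ ≤ M := this

/-- term-by-term differentiation of an everywhere convergent power series -/
lemma deriv_rep (a : ℕ → ℝ) (φ : ℝ → ℝ)
    (hconv : ∀ x : ℝ, HasSum (fun j => a j * x ^ j) (φ x)) (x₀ : ℝ) :
    HasSum (fun j : ℕ => (((j : ℝ) + 1) * a (j + 1)) * x₀ ^ j) (deriv φ x₀) ∧
      HasDerivAt φ (deriv φ x₀) x₀ := by
  set R : ℝ := |x₀| + 1 with hR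
  have hR0 : 0 < R := by positivity
  obtain ⟨M, hM0, hM⟩ := coeff_bound a φ hconv (2 * R)
  set u : ℕ → ℝ := fun j => M / R * ((j : ℝ) * (1 / 2) ^ j) with hu
  have hsu : Summable u := by
    apply Summable.mul_left
    have := summable_pow_mul_geometric_of_norm_lt_one (R := ℝ) 1
      (r := (1:ℝ)/2) (by norm_num [abs_of_nonneg])
    simpa using this
  set g : ℕ → ℝ → ℝ := fun n y => a n * y ^ n with hg
  set g' : ℕ → ℝ → ℝ := fun n y => a n * ((n : ℝ) * y ^ (n - 1)) with hg'
  have hder : ∀ n y, y ∈ Metric.ball (0:ℝ) R → HasDerivAt (g n) (g' n y) y :=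
    fun n y _ => (hasDerivAt_pow n y).const_mul (a n)
  have hbound : ∀ n y, y ∈ Metric.ball (0:ℝ) R → ‖g' n y‖ ≤ u n := by
    rintro (_ | m) y hy
    · simp [hg', hu, div_nonneg hM0 hR0.le]
    · have hyR : |y| ≤ R := by
        have := mem_ball_iff_norm.mp hy
        simp only [sub_zero, Real.norm_eq_abs] at this
        exact this.le
      have h1 : ‖g' (m + 1) y‖ = ((m : ℝ) + 1) * |a (m + 1)| * |y| ^ m := by
        simp only [hg', Real.norm_eq_abs, abs_mul, abs_pow, Nat.abs_cast,
          Nat.add_sub_cancel]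
        push_cast
        ring
      have h2half : (2:ℝ)^(m+1) * (1/2:ℝ)^(m+1) = 1 := by
        rw [← mul_pow]; norm_num
      have e2 : |a (m+1)| * R^(m+1) ≤ M * (1/2)^(m+1) := by
        have e1 : |a (m+1)| * (2*R)^(m+1) ≤ M := hM (m+1)
        calc |a (m+1)| * R^(m+1)
            = |a (m+1)| * (2*R)^(m+1) * (1/2)^(m+1) := by
              rw [mul_pow]
              have e3 : |a (m+1)| * ((2:ℝ)^(m+1) * R^(m+1)) * (1/2)^(m+1)
                  = |a (m+1)| * R^(m+1) * ((2:ℝ)^(m+1) * (1/2)^(m+1)) := by ring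
              rw [e3, h2half, mul_one]
          _ ≤ M * (1/2)^(m+1) := by gcongr
      have target_eq : u (m+1) = M * ((m:ℝ)+1) * (1/2)^(m+1) / R := by
        simp only [hu]; push_cast; ring
      rw [h1, target_eq, le_div_iff₀ hR0]
      calc ((m:ℝ)+1) * |a (m+1)| * |y| ^ m * R
          ≤ ((m:ℝ)+1) * |a (m+1)| * R ^ m * R := by gcongr
        _ = ((m:ℝ)+1) * (|a (m+1)| * R ^ (m+1)) := by ring
        _ ≤ ((m:ℝ)+1) * (M * (1/2)^(m+1)) := by gcongr
        _ = M * ((m:ℝ)+1) * (1/2)^(m+1) := by ring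
  have hx₀ : x₀ ∈ Metric.ball (0:ℝ) R := by
    simp only [Metric.mem_ball, dist_zero_right, Real.norm_eq_abs]
    linarith [abs_nonneg x₀]
  have hg0 : Summable fun n => g n x₀ := (hconv x₀).summable
  have main := hasDerivAt_tsum_of_isPreconnected hsu Metric.isOpen_ball
    (convex_ball (0:ℝ) R).isPreconnected hder hbound hx₀ hg0 hx₀
  have hfun : (fun z => ∑' n, g n z) = φ := funext fun y => (hconv y).tsum_eq
  rw [hfun] at main
  have hsum' : Summable fun n => g' n x₀ :=
    Summable.of_norm_bounded hsu (fun n => hbound n x₀ hx₀)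
  have hhs : HasSum (fun n => g' n x₀) (∑' n, g' n x₀) := hsum'.hasSum
  have hshift : HasSum (fun j : ℕ => (((j : ℝ) + 1) * a (j + 1)) * x₀ ^ j)
      (∑' n, g' n x₀) := by
    have hzero : ∀ n, n ∉ Set.range Nat.succ → g' n x₀ = 0 := by
      rintro (_ | m) hn
      · simp [hg']
      · exact absurd ⟨m, rfl⟩ hn
    have h5 := (Function.Injective.hasSum_iff Nat.succ_injective hzero).mpr hhs
    have heq : ((fun x => g' x x₀) ∘ Nat.succ) =
        fun j : ℕ => (((j : ℝ) + 1) * a (j + 1)) * x₀ ^ j := by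
      funext j
      simp only [hg', Function.comp, Nat.succ_eq_add_one, Nat.add_sub_cancel]
      push_cast
      ring
    rwa [heq] at h5
  have hderiv : deriv φ x₀ = ∑' n, g' n x₀ := main.deriv
  rw [hderiv]
  exact ⟨hshift, main⟩


/-- every iterated derivative has a power series representation -/
lemma iter_rep (a : ℕ → ℝ) (φ : ℝ → ℝ)
    (hconv : ∀ x : ℝ, HasSum (fun j => a j * x ^ j) (φ x)) (k : ℕ) :
    ∃ ak : ℕ → ℝ, ∀ x : ℝ, HasSum (fun j => ak j * x ^ j) (iteratedDeriv k φ x) := by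
  induction k with
  | zero => exact ⟨a, by simpa [iteratedDeriv_zero] using hconv⟩
  | succ k ih =>
    obtain ⟨ak, hak⟩ := ih
    refine ⟨fun j => ((j : ℝ) + 1) * ak (j + 1), fun x => ?_⟩
    have := (deriv_rep ak _ hak x).1
    rwa [iteratedDeriv_succ]

lemma hasDerivAt_iter (a : ℕ → ℝ) (φ : ℝ → ℝ)
    (hconv : ∀ x : ℝ, HasSum (fun j => a j * x ^ j) (φ x)) (k : ℕ) (x : ℝ) :
    HasDerivAt (iteratedDeriv k φ) (iteratedDeriv (k + 1) φ x) x := by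
  obtain ⟨ak, hak⟩ := iter_rep a φ hconv k
  have h := (deriv_rep ak _ hak x).2
  rwa [iteratedDeriv_succ]

/-- iterated derivatives of `h x = x * φ' x - c * φ x` -/
lemma iter_h (a : ℕ → ℝ) (φ : ℝ → ℝ)
    (hconv : ∀ x : ℝ, HasSum (fun j => a j * x ^ j) (φ x)) (c : ℕ) (k : ℕ) (x : ℝ) :
    iteratedDeriv k (fun y => y * deriv φ y - (c : ℝ) * φ y) x =
      x * iteratedDeriv (k + 1) φ x + ((k : ℝ) - c) * iteratedDeriv k φ x := by
  induction k generalizing x with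
  | zero =>
    simp only [iteratedDeriv_zero, iteratedDeriv_one, Nat.cast_zero]
    rw [iteratedDeriv_one]
    ring
  | succ k ih =>
    rw [iteratedDeriv_succ]
    have hfun : iteratedDeriv k (fun y => y * deriv φ y - (c : ℝ) * φ y) =
        fun y => y * iteratedDeriv (k + 1) φ y + ((k : ℝ) - c) * iteratedDeriv k φ y :=
      funext fun y => ih y
    rw [hfun]
    have hd : HasDerivAt
        (fun y => y * iteratedDeriv (k + 1) φ y + ((k : ℝ) - c) * iteratedDeriv k φ y)
        ((1 * iteratedDeriv (k + 1) φ x + x * iteratedDeriv (k + 2) φ x) +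
          ((k : ℝ) - c) * iteratedDeriv (k + 1) φ x) x := by
      exact ((hasDerivAt_id x).mul (hasDerivAt_iter a φ hconv (k + 1) x)).add
        ((hasDerivAt_iter a φ hconv k x).const_mul ((k : ℝ) - c))
    rw [hd.deriv]
    push_cast
    ring


/-- the series for `h x = x * φ' x - c * φ x` -/
lemma hconv_b (a : ℕ → ℝ) (φ : ℝ → ℝ)
    (hconv : ∀ x : ℝ, HasSum (fun j => a j * x ^ j) (φ x)) (c : ℕ) (x : ℝ) :
    HasSum (fun j : ℕ => (((j : ℝ) - c) * a j) * x ^ j)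
      (x * deriv φ x - (c : ℝ) * φ x) := by
  have h1 := (deriv_rep a φ hconv x).1.mul_left x
  -- h1 : HasSum (fun j => x * (((j:ℝ)+1) * a (j+1) * x^j)) (x * deriv φ x)
  have h2 : HasSum (fun j : ℕ => ((j : ℝ) * a j) * x ^ j) (x * deriv φ x) := by
    have hzero : ∀ n : ℕ, n ∉ Set.range Nat.succ → ((n : ℝ) * a n) * x ^ n = 0 := by
      rintro (_ | m) hn
      · simp
      · exact absurd ⟨m, rfl⟩ hn
    refine (Function.Injective.hasSum_iff Nat.succ_injective hzero).mp ?_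
    have heq : ((fun n : ℕ => ((n : ℝ) * a n) * x ^ n) ∘ Nat.succ) =
        fun j : ℕ => x * ((((j : ℝ) + 1) * a (j + 1)) * x ^ j) := by
      funext j
      simp only [Function.comp, Nat.succ_eq_add_one]
      push_cast
      ring
    rw [heq]
    exact h1
  have h3 := h2.sub ((hconv x).mul_left (c : ℝ))
  have heq2 : (fun j : ℕ => ((j : ℝ) * a j) * x ^ j - (c : ℝ) * (a j * x ^ j)) =
      fun j : ℕ => (((j : ℝ) - c) * a j) * x ^ j := by
    funext j; ring
  rwa [heq2] at h3


/-- if some product of coefficients is negative, there is a sign-change pair -/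
lemma pair_exists (a : ℕ → ℝ) (i j : ℕ) (hij : i < j) (hneg : a i * a j < 0) :
    (signChangePairs a).Nonempty := by
  have hex : ∃ k, i < k ∧ a i * a k < 0 := ⟨j, hij, hneg⟩
  classical
  set k := Nat.find hex with hk
  obtain ⟨hik, hneg'⟩ := Nat.find_spec hex
  have hmin : ∀ l, l < k → ¬(i < l ∧ a i * a l < 0) := fun l hl => Nat.find_min hex hl
  have hai : a i ≠ 0 := fun h => by simp [h] at hneg
  set P : ℕ → Prop := fun m => a m ≠ 0 with hP
  have hPi : P i := hai
  have hik1 : i ≤ k - 1 := by omega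
  set m := Nat.findGreatest P (k - 1) with hm
  have hPm : P m := Nat.findGreatest_spec (m := i) hik1 hPi
  have him : i ≤ m := Nat.le_findGreatest hik1 hPi
  have hmk : m < k := by
    have := Nat.findGreatest_le (P := P) (k - 1)
    omega
  have hbetween : ∀ l, m < l → l < k → a l = 0 := by
    intro l hml hlk
    by_contra hne
    have h1 : l ≤ k - 1 := by omega
    have h2 := Nat.le_findGreatest (P := P) h1 hne
    omega
  have hsign : 0 < a m * a i := by
    rcases eq_or_lt_of_le him with heq | hlt
    · rw [← heq]; exact mul_self_pos.mpr hai
    · by_contra hle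
      push_neg at hle
      have hne0 : a m * a i ≠ 0 := mul_ne_zero hPm hai
      have : a i * a m < 0 := by
        rcases lt_or_eq_of_le hle with h | h
        · linarith [mul_comm (a m) (a i)]
        · exact (hne0 h).elim

      exact hmin m hmk ⟨hlt, this⟩
  have hmk2 : a m * a k < 0 := by
    have hi2 : 0 < a i * a i := mul_self_pos.mpr hai
    nlinarith
  exact ⟨(m, k), hmk, hmk2, hbetween⟩

lemma no_pairs_nonneg (a : ℕ → ℝ) (h : signChangePairs a = ∅) :
    ∀ i j, 0 ≤ a i * a j := by
  intro i j
  by_contra hlt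
  push_neg at hlt
  have hij : i ≠ j := by
    rintro rfl
    nlinarith
  rcases hij.lt_or_gt with hij' | hij'
  · obtain ⟨p, hp⟩ := pair_exists a i j hij' hlt
    simp [h] at hp
  · obtain ⟨p, hp⟩ := pair_exists a j i hij' (by linarith [mul_comm (a i) (a j)])
    simp [h] at hp

/-- second component of a pair determines the first -/
lemma pair_fst_unique (a : ℕ → ℝ) {p q : ℕ × ℕ} (hp : p ∈ signChangePairs a)
    (hq : q ∈ signChangePairs a) (h2 : p.2 = q.2) : p = q := by
  obtain ⟨hp1, hp2, hp3⟩ := hp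
  obtain ⟨hq1, hq2, hq3⟩ := hq
  have hap : a p.1 ≠ 0 := fun h => by simp [h] at hp2
  have haq : a q.1 ≠ 0 := fun h => by simp [h] at hq2
  have : p.1 = q.1 := by
    by_contra hne
    rcases Nat.lt_or_ge p.1 q.1 with h | h
    · exact haq (hp3 q.1 h (h2 ▸ hq1))
    · have h' : q.1 < p.1 := by omega
      exact hap (hq3 p.1 h' (h2 ▸ hp1))
  exact Prod.ext this h2


lemma count_lemma (a : ℕ → ℝ) {i c : ℕ} (hic : (i, c) ∈ signChangePairs a)
    (hmin : ∀ p ∈ signChangePairs a, c ≤ p.2) :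
    (signChangePairs fun j => ((j : ℝ) - c) * a j).encard + 1 ≤ (signChangePairs a).encard ∧
      ((signChangePairs a).Finite →
        (signChangePairs fun j => ((j : ℝ) - c) * a j).Finite ∧
          (signChangePairs fun j => ((j : ℝ) - c) * a j).ncard + 1 ≤
            (signChangePairs a).ncard) := by
  classical
  set b : ℕ → ℝ := fun j => ((j : ℝ) - c) * a j with hb
  obtain ⟨hic1, hic2, hic3⟩ := hic
  simp only at hic1 hic2 hic3
  have hai : a i ≠ 0 := fun h => by simp [h] at hic2
  have hac : a c ≠ 0 := fun h => by simp [h] at hic2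
  set g : ℕ × ℕ → ℕ × ℕ := fun p => (if p.1 < c then c else p.1, p.2) with hg
  -- main claim
  have halpha : ∀ p ∈ signChangePairs b, g p ∈ signChangePairs a ∧ c < p.2 := by
    rintro ⟨p1, p2⟩ ⟨hp1, hp2, hp3⟩
    simp only at hp1 hp2 hp3
    have hbp1 : b p1 ≠ 0 := fun h => by simp [h] at hp2
    have hbp2 : b p2 ≠ 0 := fun h => by simp [h] at hp2
    have hap1 : a p1 ≠ 0 := fun h => by simp [hb, h] at hbp1
    have hap2 : a p2 ≠ 0 := fun h => by simp [hb, h] at hbp2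
    have hp1c : p1 ≠ c := by rintro rfl; simp [hb] at hbp1
    have hp2c : p2 ≠ c := by rintro rfl; simp [hb] at hbp2
    have habk : ∀ k, p1 < k → k < p2 → k ≠ c → a k = 0 := by
      intro k h1 h2 h3
      have := hp3 k h1 h2
      have hkc : ((k : ℝ) - c) ≠ 0 := by
        simp only [sub_ne_zero]
        exact_mod_cast fun h => h3 (by exact_mod_cast h)
      rcases mul_eq_zero.mp this with h | h
      · exact absurd h hkc
      · exact h
    have hcp2 : c < p2 := by
      rcases Nat.lt_or_ge p2 c with hlt | hge
      · -- p2 < c : contradiction with minimality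
        exfalso
        have hr1 : ((p1 : ℝ) - c) < 0 := by
          have : (p1 : ℝ) < c := by exact_mod_cast (by omega : p1 < c)
          linarith
        have hr2 : ((p2 : ℝ) - c) < 0 := by
          have : (p2 : ℝ) < c := by exact_mod_cast hlt
          linarith
        have hsgn : a p1 * a p2 < 0 := by
          have e : b p1 * b p2 = ((p1:ℝ) - c) * ((p2:ℝ) - c) * (a p1 * a p2) := by
            simp only [hb]; ring
          have hbb : ((p1:ℝ) - c) * ((p2:ℝ) - c) * (a p1 * a p2) < 0 := e ▸ hp2
          have huv : 0 < ((p1:ℝ) - c) * ((p2:ℝ) - c) := mul_pos_of_neg_of_neg hr1 hr2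
          by_contra hcon
          push_neg at hcon
          have := mul_nonneg huv.le hcon
          linarith
        have hmem : ((p1, p2) : ℕ × ℕ) ∈ signChangePairs a :=
          ⟨hp1, hsgn, fun k h1 h2 => habk k h1 h2 (by omega)⟩
        have := hmin _ hmem
        simp only at this
        omega
      · omega
    refine ⟨?_, hcp2⟩
    rcases Nat.lt_or_ge p1 c with hp1lt | hp1ge
    · -- p1 < c, so p1 = i and (c, p2) is a pair of a
      have hp1i : p1 = i := by
        rcases Nat.lt_trichotomy p1 i with h | h | h
        · exfalso
          have : b i = 0 := hp3 i h (by omega)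
          have : ((i:ℝ) - c) * a i = 0 := this
          rcases mul_eq_zero.mp this with h' | h'
          · have : (i:ℝ) < c := by exact_mod_cast hic1
            linarith [sub_ne_zero.mpr (ne_of_lt this) , h']
          · exact hai h'
        · exact h
        · exact absurd (hic3 p1 h hp1lt) hap1
      subst hp1i
      have hr1 : ((p1 : ℝ) - c) < 0 := by
        have : (p1 : ℝ) < c := by exact_mod_cast hp1lt
        linarith
      have hr2 : (0:ℝ) < (p2 : ℝ) - c := by
        have : (c : ℝ) < p2 := by exact_mod_cast hcp2
        linarith
    -- a p1 * a p2 > 0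
      have hsgn : 0 < a p1 * a p2 := by
        have e : b p1 * b p2 = ((p1:ℝ) - c) * ((p2:ℝ) - c) * (a p1 * a p2) := by
          simp only [hb]; ring
        have hbb : ((p1:ℝ) - c) * ((p2:ℝ) - c) * (a p1 * a p2) < 0 := e ▸ hp2
        have huv : ((p1:ℝ) - c) * ((p2:ℝ) - c) < 0 := mul_neg_of_neg_of_pos hr1 hr2
        by_contra hcon
        push_neg at hcon
        have := mul_nonneg_of_nonpos_of_nonpos huv.le hcon
        linarith
      have hsgn2 : a c * a p2 < 0 := by
        have hsq : 0 < a p1 * a p1 := mul_self_pos.mpr hap1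
        nlinarith
      have hmem : ((c, p2) : ℕ × ℕ) ∈ signChangePairs a := by
        refine ⟨hcp2, hsgn2, fun k h1 h2 => habk k (by omega) h2 (by omega)⟩
      have : g (p1, p2) = (c, p2) := by simp [hg, hp1lt]
      rw [this]
      exact hmem
    · -- c < p1
      have hp1gt : c < p1 := by omega
      have hr1 : (0:ℝ) < (p1 : ℝ) - c := by
        have : (c : ℝ) < p1 := by exact_mod_cast hp1gt
        linarith
      have hr2 : (0:ℝ) < (p2 : ℝ) - c := by
        have : (c : ℝ) < p2 := by exact_mod_cast hcp2
        linarith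
      have hsgn : a p1 * a p2 < 0 := by
        have e : b p1 * b p2 = ((p1:ℝ) - c) * ((p2:ℝ) - c) * (a p1 * a p2) := by
          simp only [hb]; ring
        have hbb : ((p1:ℝ) - c) * ((p2:ℝ) - c) * (a p1 * a p2) < 0 := e ▸ hp2
        have huv : 0 < ((p1:ℝ) - c) * ((p2:ℝ) - c) := mul_pos hr1 hr2
        by_contra hcon
        push_neg at hcon
        have := mul_nonneg huv.le hcon
        linarith
      have hmem : ((p1, p2) : ℕ × ℕ) ∈ signChangePairs a :=
        ⟨hp1, hsgn, fun k h1 h2 => habk k h1 h2 (by omega)⟩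
      have : g (p1, p2) = (p1, p2) := by simp [hg, Nat.not_lt.mpr (le_of_lt hp1gt)]
      rw [this]
      exact hmem
  have hinj : Set.InjOn g (signChangePairs b) := by
    intro p hp q hq hpq
    have h2 : p.2 = q.2 := by
      have : (g p).2 = (g q).2 := by rw [hpq]
      simpa [hg] using this
    exact pair_fst_unique b hp hq h2
  have hnotmem : ((i, c) : ℕ × ℕ) ∉ g '' signChangePairs b := by
    rintro ⟨p, hp, hgp⟩
    have := (halpha p hp).2
    have : (g p).2 = c := by rw [hgp]
    simp only [hg] at this
    omega
  have hsub : insert ((i, c) : ℕ × ℕ) (g '' signChangePairs b) ⊆ signChangePairs a := by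
    rintro q hq
    rcases Set.mem_insert_iff.mp hq with rfl | ⟨p, hp, rfl⟩
    · exact ⟨hic1, hic2, hic3⟩
    · exact (halpha p hp).1
  constructor
  · calc (signChangePairs b).encard + 1
        = (g '' signChangePairs b).encard + 1 := by rw [hinj.encard_image]
      _ = (insert ((i, c) : ℕ × ℕ) (g '' signChangePairs b)).encard :=
          (Set.encard_insert_of_notMem hnotmem).symm
      _ ≤ (signChangePairs a).encard := Set.encard_mono hsub
  · intro hfin
    have hfin_ins : (insert ((i, c) : ℕ × ℕ) (g '' signChangePairs b)).Finite :=
      hfin.subset hsub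
    have hfin_img : (g '' signChangePairs b).Finite :=
      hfin_ins.subset (Set.subset_insert _ _)
    have hfin_b : (signChangePairs b).Finite :=
      Set.Finite.of_finite_image hfin_img hinj
    refine ⟨hfin_b, ?_⟩
    calc (signChangePairs b).ncard + 1
        = (g '' signChangePairs b).ncard + 1 := by
          rw [Set.ncard_image_of_injOn hinj]
      _ = (insert ((i, c) : ℕ × ℕ) (g '' signChangePairs b)).ncard :=
          (Set.ncard_insert_of_notMem hnotmem hfin_img).symm
      _ ≤ (signChangePairs a).ncard := Set.ncard_le_ncard hsub hfin



lemma rolle_point (φ : ℝ → ℝ)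
    (hdiff : ∀ x : ℝ, HasDerivAt φ (deriv φ x) x) (c : ℕ) (hc : 1 ≤ c)
    (z1 z2 : ℝ) (h1 : 0 < z1) (h12 : z1 < z2) (hz1 : φ z1 = 0) (hz2 : φ z2 = 0) :
    ∃ w, z1 < w ∧ w < z2 ∧ w * deriv φ w - (c : ℝ) * φ w = 0 := by
  set F : ℝ → ℝ := fun y => φ y * (y ^ c)⁻¹ with hF
  have hFd : ∀ x ∈ Set.Ioo z1 z2, HasDerivAt F
      ((x * deriv φ x - (c : ℝ) * φ x) / x ^ (c + 1)) x := by
    intro x hx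
    have hx0 : 0 < x := lt_trans h1 hx.1
    have hxc : x ^ c ≠ 0 := pow_ne_zero c hx0.ne'
    have hd : HasDerivAt (fun y => φ y * (y ^ c)⁻¹)
        (deriv φ x * (x ^ c)⁻¹ + φ x * (-((c : ℝ) * x ^ (c - 1)) / (x ^ c) ^ 2)) x :=
      (hdiff x).mul ((hasDerivAt_pow c x).inv hxc)
    convert hd using 1
    obtain ⟨c', rfl⟩ : ∃ c', c = c' + 1 := ⟨c - 1, by omega⟩
    simp only [Nat.add_sub_cancel]
    field_simp
    ring
  have hcont : ContinuousOn F (Set.Icc z1 z2) := by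
    intro x hx
    have hx0 : 0 < x := lt_of_lt_of_le h1 hx.1
    have hxc : x ^ c ≠ 0 := pow_ne_zero c hx0.ne'
    exact (((hdiff x).continuousAt.mul
      ((((continuous_pow c).continuousAt).inv₀ hxc))).continuousWithinAt)
  have hFI : F z1 = F z2 := by simp [hF, hz1, hz2]
  obtain ⟨w, hw, hw0⟩ := exists_hasDerivAt_eq_zero h12 hcont hFI hFd
  refine ⟨w, hw.1, hw.2, ?_⟩
  have hwpos : 0 < w := lt_trans h1 hw.1
  have := div_eq_zero_iff.mp hw0
  rcases this with h | h
  · exact h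
  · exact absurd h (pow_ne_zero _ hwpos.ne')

/-- base case: if there are no sign changes, φ has no positive zeros -/
lemma base_no_zero (a : ℕ → ℝ) (φ : ℝ → ℝ)
    (hconv : ∀ x : ℝ, HasSum (fun j => a j * x ^ j) (φ x))
    (hne : ∃ j, a j ≠ 0) (hemp : signChangePairs a = ∅) :
    ∀ x : ℝ, 0 < x → φ x ≠ 0 := by
  obtain ⟨J, hJ⟩ := hne
  have hprod := no_pairs_nonneg a hemp
  have key : ∀ (b : ℕ → ℝ) (ψ : ℝ → ℝ),
      (∀ x : ℝ, HasSum (fun j => b j * x ^ j) (ψ x)) →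
      0 < b J → (∀ j, 0 ≤ b j) → ∀ x, 0 < x → 0 < ψ x := by
    intro b ψ hcv hbJ hbnn x hx
    have h1 : 0 < b J * x ^ J := by positivity
    have h2 : b J * x ^ J ≤ ψ x :=
      le_hasSum (hcv x) J (fun j _ => by
        have := hbnn j
        positivity)
    linarith
  intro x hx
  rcases hJ.lt_or_gt with hJn | hJp
  · have hcv' : ∀ y : ℝ, HasSum (fun j => (-a j) * y ^ j) (-φ y) := by
      intro y
      have := (hconv y).neg
      simpa [neg_mul] using this
    have hnn : ∀ j, 0 ≤ -a j := by
      intro j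
      rcases le_or_gt (a j) 0 with hle | hlt
      · linarith
      · exfalso
        have := hprod j J
        nlinarith
    have := key (fun j => -a j) (fun y => -φ y) hcv' (by simpa using hJn) hnn x hx
    intro hzero
    simp [hzero] at this
  · have hnn : ∀ j, 0 ≤ a j := by
      intro j
      rcases le_or_gt 0 (a j) with hle | hlt
      · exact hle
      · exfalso
        have := hprod j J
        nlinarith
    have := key a φ hconv hJp hnn x hx
    linarith


lemma empty_case (a : ℕ → ℝ) (φ : ℝ → ℝ)
    (hconv : ∀ x : ℝ, HasSum (fun j => a j * x ^ j) (φ x))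
    (hne : ∃ j, a j ≠ 0) (hemp : signChangePairs a = ∅)
    (Z : Finset ℝ) (hZ : ∀ z ∈ Z, 0 < z ∧ φ z = 0) (mult : ℝ → ℕ) :
    (∑ z ∈ Z, (mult z : ℕ∞)) ≤ (signChangePairs a).encard := by
  have hZe : Z = ∅ := Finset.eq_empty_of_forall_notMem fun z hz =>
    base_no_zero a φ hconv hne hemp z (hZ z hz).1 (hZ z hz).2
  rw [hZe]
  simp

lemma descartes_aux (n : ℕ) :
    ∀ (a : ℕ → ℝ) (φ : ℝ → ℝ),
      (∀ x : ℝ, HasSum (fun j => a j * x ^ j) (φ x)) →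
      (∃ j, a j ≠ 0) →
      ∀ Z : Finset ℝ, (∀ z ∈ Z, 0 < z ∧ φ z = 0) →
      ∀ mult : ℝ → ℕ,
        (∀ z ∈ Z, 1 ≤ mult z ∧ ∀ k < mult z, iteratedDeriv k φ z = 0) →
        (signChangePairs a).Finite → (signChangePairs a).ncard ≤ n →
        (∑ z ∈ Z, (mult z : ℕ∞)) ≤ (signChangePairs a).encard := by
  induction n with
  | zero =>
    intro a φ hconv hne Z hZ mult hmult hfin hcard
    have hemp : signChangePairs a = ∅ :=
      (Set.ncard_eq_zero hfin).mp (Nat.le_zero.mp hcard)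
    exact empty_case a φ hconv hne hemp Z hZ mult
  | succ n ih =>
    intro a φ hconv hne Z hZ mult hmult hfin hcard
    classical
    rcases Set.eq_empty_or_nonempty (signChangePairs a) with hemp | ⟨p₀, hp₀⟩
    · exact empty_case a φ hconv hne hemp Z hZ mult
    -- find the first sign change
    have hexq : ∃ q, ∃ i, ((i, q) : ℕ × ℕ) ∈ signChangePairs a :=
      ⟨p₀.2, p₀.1, hp₀⟩
    set c := Nat.find hexq with hc
    obtain ⟨i, hic⟩ := Nat.find_spec hexq
    have hmin : ∀ p ∈ signChangePairs a, c ≤ p.2 := by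
      intro p hp
      by_contra hlt
      push_neg at hlt
      exact Nat.find_min hexq hlt ⟨p.1, by simpa using hp⟩
    have hiltc : i < c := hic.1
    have hai : a i ≠ 0 := fun hzero => by
      have := hic.2.1
      simp [hzero] at this
    have hc1 : 1 ≤ c := by omega
    -- the transformed series
    set b : ℕ → ℝ := fun j => ((j : ℝ) - c) * a j with hb
    set h : ℝ → ℝ := fun y => y * deriv φ y - (c : ℝ) * φ y with hh
    have hconvb : ∀ x : ℝ, HasSum (fun j => b j * x ^ j) (h x) := fun x =>
      hconv_b a φ hconv c x
    have hneb : ∃ j, b j ≠ 0 := by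
      refine ⟨i, ?_⟩
      have hic' : (i : ℝ) - c ≠ 0 := by
        have h1 : (i : ℝ) < c := by exact_mod_cast hiltc
        intro hcon
        linarith [sub_eq_zero.mp hcon]
      exact mul_ne_zero hic' hai
    obtain ⟨hcount1, hcount2⟩ := count_lemma a hic hmin
    have hcount1' : (signChangePairs b).encard + 1 ≤ (signChangePairs a).encard := hcount1
    obtain ⟨hfinb, hcardb⟩ := hcount2 hfin
    have hfinb' : (signChangePairs b).Finite := hfinb
    have hcardb' : (signChangePairs b).ncard ≤ n := by
      have : (signChangePairs b).ncard + 1 ≤ (signChangePairs a).ncard := hcardb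
      omega
    have hdiff : ∀ x : ℝ, HasDerivAt φ (deriv φ x) x := fun x =>
      (deriv_rep a φ hconv x).2
    -- if Z is empty we are done
    rcases Finset.eq_empty_or_nonempty Z with rfl | hZne
    · simp
    set zmax := Z.max' hZne with hzmax
    have hzmaxZ : zmax ∈ Z := Z.max'_mem hZne
    -- the "next zero" function
    have hfilne : ∀ z ∈ Z.erase zmax, (Z.filter fun y => z < y).Nonempty := by
      intro z hz
      obtain ⟨hzne, hzZ⟩ := Finset.mem_erase.mp hz
      exact ⟨zmax, Finset.mem_filter.mpr ⟨hzmaxZ,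
        lt_of_le_of_ne (Z.le_max' z hzZ) hzne⟩⟩
    set nxt : ℝ → ℝ := fun z =>
      if hz : (Z.filter fun y => z < y).Nonempty then (Z.filter fun y => z < y).min' hz
      else 0 with hnxt
    have hnxt_spec : ∀ z ∈ Z.erase zmax,
        nxt z ∈ Z ∧ z < nxt z ∧ ∀ y ∈ Z, z < y → nxt z ≤ y := by
      intro z hz
      have hne' := hfilne z hz
      have e : nxt z = (Z.filter fun y => z < y).min' hne' := by
        simp only [hnxt, dif_pos hne']
      refine ⟨?_, ?_, ?_⟩
      · rw [e]; exact (Finset.mem_filter.mp ((Z.filter fun y => z < y).min'_mem hne')).1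
      · rw [e]; exact (Finset.mem_filter.mp ((Z.filter fun y => z < y).min'_mem hne')).2
      · intro y hy hzy
        rw [e]
        exact Finset.min'_le _ y (Finset.mem_filter.mpr ⟨hy, hzy⟩)
    -- choose Rolle points
    have hrolle : ∀ z : ℝ, ∃ w, z ∈ Z.erase zmax → z < w ∧ w < nxt z ∧ h w = 0 := by
      intro z
      by_cases hz : z ∈ Z.erase zmax
      · obtain ⟨hn1, hn2, _⟩ := hnxt_spec z hz
        have hzZ := (Finset.mem_erase.mp hz).2
        obtain ⟨w, hw1, hw2, hw3⟩ := rolle_point φ hdiff c hc1 z (nxt z)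
          (hZ z hzZ).1 hn2 (hZ z hzZ).2 (hZ _ hn1).2
        exact ⟨w, fun _ => ⟨hw1, hw2, hw3⟩⟩
      · exact ⟨0, fun hcon => absurd hcon hz⟩
    choose w hw using hrolle
    have hwnotZ : ∀ z ∈ Z.erase zmax, w z ∉ Z := by
      intro z hz hcon
      obtain ⟨hw1, hw2, _⟩ := hw z hz
      obtain ⟨_, _, hn3⟩ := hnxt_spec z hz
      exact absurd (hn3 (w z) hcon hw1) (not_le.mpr hw2)
    have hkey : ∀ u v : ℝ, u ∈ Z.erase zmax → v ∈ Z.erase zmax → u < v → w u < w v := by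
      intro u v hu hv huv
      obtain ⟨hu1, hu2, _⟩ := hw u hu
      obtain ⟨hv1, _, _⟩ := hw v hv
      obtain ⟨_, _, hn3⟩ := hnxt_spec u hu
      have hvZ : v ∈ Z := (Finset.mem_erase.mp hv).2
      have := hn3 v hvZ huv
      linarith
    have hwinj : Set.InjOn w (Z.erase zmax : Finset ℝ) := by
      intro z1 hz1 z2 hz2 heq
      by_contra hne'
      rcases Ne.lt_or_gt hne' with hlt | hlt
      · exact absurd heq (hkey z1 z2 (Finset.mem_coe.mp hz1) (Finset.mem_coe.mp hz2) hlt).ne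
      · exact absurd heq (hkey z2 z1 (Finset.mem_coe.mp hz2) (Finset.mem_coe.mp hz1) hlt).ne'
    set R : Finset ℝ := (Z.erase zmax).image w with hR
    have hcardR : R.card = Z.card - 1 := by
      rw [hR, Finset.card_image_of_injOn hwinj, Finset.card_erase_of_mem hzmaxZ]
    set Z2 : Finset ℝ := Z.filter (fun z => 2 ≤ mult z) with hZ2
    have hdisj : Disjoint Z2 R := by
      rw [Finset.disjoint_left]
      intro z hz hzR
      obtain ⟨y, hy, rfl⟩ := Finset.mem_image.mp hzR
      exact hwnotZ y hy (Finset.mem_of_mem_filter _ hz)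
    set Z' : Finset ℝ := Z2 ∪ R with hZ'def
    set mult' : ℝ → ℕ := fun z => if z ∈ Z then mult z - 1 else 1 with hmult'
    -- hypotheses for the recursive call
    have hZ' : ∀ z ∈ Z', 0 < z ∧ h z = 0 := by
      intro z hz
      rcases Finset.mem_union.mp hz with hz | hz
      · have hzZ := Finset.mem_of_mem_filter _ hz
        have hm2 : 2 ≤ mult z := (Finset.mem_filter.mp hz).2
        refine ⟨(hZ z hzZ).1, ?_⟩
        have h0 : iteratedDeriv 0 φ z = 0 := (hmult z hzZ).2 0 (by omega)
        have h1 : iteratedDeriv 1 φ z = 0 := (hmult z hzZ).2 1 (by omega)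
        rw [iteratedDeriv_zero] at h0
        rw [iteratedDeriv_one] at h1
        simp [hh, h0, h1]
      · obtain ⟨y, hy, rfl⟩ := Finset.mem_image.mp hz
        obtain ⟨hw1, hw2, hw3⟩ := hw y hy
        have hyZ := (Finset.mem_erase.mp hy).2
        exact ⟨lt_trans (hZ y hyZ).1 hw1, hw3⟩
    have hmult'h : ∀ z ∈ Z', 1 ≤ mult' z ∧ ∀ k < mult' z, iteratedDeriv k h z = 0 := by
      intro z hz
      rcases Finset.mem_union.mp hz with hz | hz
      · have hzZ := Finset.mem_of_mem_filter _ hz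
        have hm2 : 2 ≤ mult z := (Finset.mem_filter.mp hz).2
        have hm' : mult' z = mult z - 1 := by simp [hmult', hzZ]
        rw [hm']
        constructor
        · omega
        · intro k hk
          have e := iter_h a φ hconv c k z
          have e0 : iteratedDeriv (k + 1) φ z = 0 := (hmult z hzZ).2 (k + 1) (by omega)
          have e1 : iteratedDeriv k φ z = 0 := (hmult z hzZ).2 k (by omega)
          rw [hh]
          rw [e, e0, e1]
          ring
      · obtain ⟨y, hy, rfl⟩ := Finset.mem_image.mp hz
        have hnotZ := hwnotZ y hy
        have hm' : mult' (w y) = 1 := by simp [hmult', hnotZ]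
        rw [hm']
        refine ⟨le_refl 1, fun k hk => ?_⟩
        have hk0 : k = 0 := by omega
        subst hk0
        rw [iteratedDeriv_zero]
        exact (hw y hy).2.2
    have hrec := ih b h hconvb hneb Z' hZ' mult' hmult'h hfinb' hcardb'
    -- sum bookkeeping in ℕ
    have hsum1 : ∑ z ∈ Z', mult' z = (∑ z ∈ Z2, (mult z - 1)) + R.card := by
      rw [hZ'def, Finset.sum_union hdisj]
      congr 1
      · apply Finset.sum_congr rfl
        intro z hz
        simp [hmult', Finset.mem_of_mem_filter _ hz]
      · rw [Finset.card_eq_sum_ones]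
        apply Finset.sum_congr rfl
        intro z hz
        obtain ⟨y, hy, rfl⟩ := Finset.mem_image.mp hz
        simp [hmult', hwnotZ y hy]
    have hsum2 : ∑ z ∈ Z2, (mult z - 1) = ∑ z ∈ Z, (mult z - 1) := by
      apply Finset.sum_subset (Finset.filter_subset _ _)
      intro z hzZ hznot
      have h1 := (hmult z hzZ).1
      have h2 : ¬ 2 ≤ mult z := fun hcon =>
        hznot (Finset.mem_filter.mpr ⟨hzZ, hcon⟩)
      omega
    have hsum3 : ∑ z ∈ Z, mult z = (∑ z ∈ Z, (mult z - 1)) + Z.card := by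
      rw [Finset.card_eq_sum_ones, ← Finset.sum_add_distrib]
      apply Finset.sum_congr rfl
      intro z hz
      have := (hmult z hz).1
      omega
    have hZcard : 1 ≤ Z.card := Finset.card_pos.mpr hZne
    have hfinal_nat : ∑ z ∈ Z, mult z = (∑ z ∈ Z', mult' z) + 1 := by
      omega
    -- conclude in ℕ∞
    have cast1 : (∑ z ∈ Z, (mult z : ℕ∞)) = ((∑ z ∈ Z, mult z : ℕ) : ℕ∞) := by
      push_cast
      rfl
    have cast2 : (∑ z ∈ Z', (mult' z : ℕ∞)) = ((∑ z ∈ Z', mult' z : ℕ) : ℕ∞) := by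
      push_cast
      rfl
    calc (∑ z ∈ Z, (mult z : ℕ∞))
        = ((∑ z ∈ Z', mult' z : ℕ) : ℕ∞) + 1 := by
          rw [cast1, hfinal_nat]
          push_cast
          rfl
      _ = (∑ z ∈ Z', (mult' z : ℕ∞)) + 1 := by rw [cast2]
      _ ≤ (signChangePairs b).encard + 1 := add_le_add_left hrec 1
      _ ≤ (signChangePairs a).encard := hcount1'

/-- Descartes' rule of signs for entire functions: if
`φ(x) = ∑ j, a j x^j` is entire (the series converges everywhere) and not identically
zero, then the number of strictly positive zeros of `φ`, counted with multiplicity,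
is at most the number of sign changes of the coefficient sequence `a`.
Multiplicity is expressed via vanishing of iterated derivatives. -/
theorem descartes_rule_of_signs_entire (a : ℕ → ℝ) (φ : ℝ → ℝ)
    (hconv : ∀ x : ℝ, HasSum (fun j => a j * x ^ j) (φ x))
    (hne : ∃ j, a j ≠ 0)
    (Z : Finset ℝ) (hZ : ∀ z ∈ Z, 0 < z ∧ φ z = 0)
    (mult : ℝ → ℕ) (hmult : ∀ z ∈ Z, 1 ≤ mult z ∧ ∀ k < mult z, iteratedDeriv k φ z = 0) :
    (∑ z ∈ Z, (mult z : ℕ∞)) ≤ (signChangePairs a).encard := by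
  rcases (signChangePairs a).finite_or_infinite with hfin | hinf
  · exact descartes_aux (signChangePairs a).ncard a φ hconv hne Z hZ mult hmult hfin le_rfl
  · rw [hinf.encard_eq]
    exact le_top
end

section
/- Let G be an s-subexponential prior on [0,∞) and Y ~ f_G the Poisson mixture. Then for every integer K ≥ 0, P[Y ≥ K] ≤ (3/2) e^{-K log(1 + 1/(2s))}. -/
open MeasureTheory Real
open scoped ENNReal NNReal

/-- Poisson density with mean `θ` at point `y`. -/
noncomputable def poissonPdf (θ : ℝ) (y : ℕ) : ℝ :=
  Real.exp (-θ) * θ ^ y / (Nat.factorial y)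

/-- Poisson mixture density `f_G`. -/
noncomputable def mixturePdf (G : Measure ℝ) (y : ℕ) : ℝ :=
  ∫ θ, poissonPdf θ y ∂G

lemma poissonPdf_nonneg {θ : ℝ} (hθ : 0 ≤ θ) (y : ℕ) : 0 ≤ poissonPdf θ y := by
  unfold poissonPdf; positivity

lemma poissonPdf_measurable (y : ℕ) : Measurable fun θ => poissonPdf θ y := by
  unfold poissonPdf
  exact ((measurable_id.neg.exp.mul (measurable_id.pow_const y)).div_const _)

lemma summable_poissonPdf (θ : ℝ) : Summable (poissonPdf θ) := by
  unfold poissonPdf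
  simp_rw [mul_div_assoc]
  exact (Real.summable_pow_div_factorial θ).mul_left _

lemma tsum_poissonPdf (θ : ℝ) : ∑' y, poissonPdf θ y = 1 := by
  unfold poissonPdf
  simp_rw [mul_div_assoc]
  rw [tsum_mul_left]
  have : ∑' n : ℕ, θ ^ n / n.factorial = Real.exp θ := by
    rw [Real.exp_eq_exp_ℝ, NormedSpace.exp_eq_tsum_div]
  rw [this, ← Real.exp_add]
  simp

lemma hasDerivAt_partial (K : ℕ) (θ : ℝ) :
    HasDerivAt (fun x => ∑ y ∈ Finset.range (K+1), poissonPdf x y) (-(poissonPdf θ K)) θ := by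
  have hterm : ∀ y : ℕ, HasDerivAt (fun x => poissonPdf x y)
      ((-Real.exp (-θ) * θ ^ y + Real.exp (-θ) * (y * θ ^ (y-1))) / y.factorial) θ := by
    intro y
    have h1 : HasDerivAt (fun x : ℝ => Real.exp (-x)) (-Real.exp (-θ)) θ := by
      simpa [Function.comp_def] using (Real.hasDerivAt_exp (-θ)).comp θ (hasDerivAt_neg θ)
    exact ((h1.mul (hasDerivAt_pow y θ)).div_const _).congr_deriv (by ring)
  have hsum : HasDerivAt (fun x => ∑ y ∈ Finset.range (K+1), poissonPdf x y)
      (∑ y ∈ Finset.range (K+1),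
        ((-Real.exp (-θ) * θ ^ y + Real.exp (-θ) * (y * θ ^ (y-1))) / y.factorial)) θ :=
    HasDerivAt.fun_sum fun y _ => hterm y
  have hkey : ∑ y ∈ Finset.range (K+1),
      ((-Real.exp (-θ) * θ ^ y + Real.exp (-θ) * (y * θ ^ (y-1))) / y.factorial)
      = -(poissonPdf θ K) := by
    have hsplit : ∀ y ∈ Finset.range (K+1),
        ((-Real.exp (-θ) * θ ^ y + Real.exp (-θ) * (y * θ ^ (y-1))) / y.factorial)
        = Real.exp (-θ) * (y * θ ^ (y-1)) / y.factorial - Real.exp (-θ) * θ ^ y / y.factorial := by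
      intro y _; ring
    rw [Finset.sum_congr rfl hsplit, Finset.sum_sub_distrib]
    have h2 : ∑ y ∈ Finset.range (K+1), Real.exp (-θ) * (y * θ ^ (y-1)) / y.factorial
        = ∑ y ∈ Finset.range K, Real.exp (-θ) * θ ^ y / y.factorial := by
      rw [Finset.sum_range_succ']
      simp only [Nat.cast_zero, zero_mul, mul_zero, zero_div, add_zero]
      refine Finset.sum_congr rfl fun i _ => ?_
      have : ((i+1 : ℕ) : ℝ) * θ ^ ((i+1) - 1) / (i+1).factorial = θ ^ i / i.factorial := by
        rw [Nat.add_sub_cancel, Nat.factorial_succ]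
        push_cast
        rw [div_eq_div_iff (by positivity) (by positivity)]
        ring
      rw [mul_div_assoc, this, mul_div_assoc]
    rw [h2, Finset.sum_range_succ]
    simp only [poissonPdf]
    ring
  exact hkey ▸ hsum

lemma partial_at_zero (K : ℕ) : ∑ y ∈ Finset.range (K+1), poissonPdf 0 y = 1 := by
  rw [Finset.sum_range_succ']
  have : ∀ i ∈ Finset.range K, poissonPdf 0 (i+1) = 0 := by
    intro i _; simp [poissonPdf]
  rw [Finset.sum_congr rfl this]
  simp [poissonPdf]

lemma integral_poisson_tail (K : ℕ) {θ : ℝ} (hθ : 0 ≤ θ) :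
    ∫ t in (0:ℝ)..θ, poissonPdf t K = 1 - ∑ y ∈ Finset.range (K+1), poissonPdf θ y := by
  have hderiv : ∀ t ∈ Set.uIcc (0:ℝ) θ,
      HasDerivAt (fun x => -∑ y ∈ Finset.range (K+1), poissonPdf x y) (poissonPdf t K) t := by
    intro t _
    simpa using (hasDerivAt_partial K t).fun_neg
  have hcont : ContinuousOn (fun t => poissonPdf t K) (Set.uIcc 0 θ) := by
    apply Continuous.continuousOn
    unfold poissonPdf
    continuity
  have := intervalIntegral.integral_eq_sub_of_hasDerivAt hderiv
    (hcont.intervalIntegrable)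
  rw [this, partial_at_zero]
  ring

/-- equiv between ℕ and the subtype of naturals ≥ K -/
def natShiftEquiv (K : ℕ) : ℕ ≃ {y : ℕ // K ≤ y} where
  toFun i := ⟨i + K, Nat.le_add_left K i⟩
  invFun y := y.1 - K
  left_inv i := by simp
  right_inv y := by
    ext; exact Nat.sub_add_cancel y.2

lemma tail_eq_sub (K : ℕ) (θ : ℝ) :
    ∑' i : ℕ, poissonPdf θ (i + K) = 1 - ∑ y ∈ Finset.range K, poissonPdf θ y := by
  have := (summable_poissonPdf θ).sum_add_tsum_nat_add K
  rw [tsum_poissonPdf] at this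
  linarith

lemma tsum_subtype_eq (K : ℕ) (f : ℕ → ℝ) :
    ∑' y : {y : ℕ // K ≤ y}, f y = ∑' i : ℕ, f (i + K) :=
  ((natShiftEquiv K).tsum_eq (fun y : {y : ℕ // K ≤ y} => f y)).symm

lemma bernoulli_rpow {c : ℝ} (hc : 0 < c) {t : ℝ} (ht0 : 0 ≤ t) (ht1 : t ≤ 1) :
    c ^ t ≤ 1 + t * (c - 1) := by
  have hconv := convexOn_exp.2 (Set.mem_univ (0:ℝ)) (Set.mem_univ (Real.log c))
    (by linarith : (0:ℝ) ≤ 1 - t) ht0 (by ring)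
  simp only [smul_eq_mul, mul_zero, zero_add, Real.exp_zero] at hconv
  rw [Real.exp_log hc] at hconv
  rw [Real.rpow_def_of_pos hc]
  calc Real.exp (Real.log c * t) ≤ (1-t) * 1 + t * c := by
        rw [mul_comm]; exact hconv
    _ = 1 + t * (c - 1) := by ring

lemma key_ineq (s : ℝ) (hs : 0 < s) (K : ℕ) :
    min 1 (2 / (1 + 1/s) ^ K) ≤ (3/2) / (1 + 1/(2*s)) ^ K := by
  set b : ℝ := 1 + 1/(2*s) with hbdef
  set a : ℝ := 1 + 1/s with hadef
  have hb1 : 1 < b := by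
    have h0 : 0 < 1/(2*s) := by positivity
    rw [hbdef]; linarith
  have ha1 : 1 < a := by
    have h0 : 0 < 1/s := by positivity
    rw [hadef]; linarith
  have hbpos : (0:ℝ) < b := by linarith
  have hapos : (0:ℝ) < a := by linarith
  have hbK : (0:ℝ) < b ^ K := by positivity
  rcases Nat.eq_zero_or_pos K with hK | hK
  · subst hK; simp; norm_num
  rcases le_or_gt (b ^ K) (3/2) with hcase | hcase
  · calc min 1 (2 / a ^ K) ≤ 1 := min_le_left _ _
      _ ≤ (3/2) / b ^ K := by
        rw [le_div_iff₀ hbK]; linarith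
  · refine le_trans (min_le_right _ _) ?_
    -- need 2 / a^K ≤ (3/2) / b^K  ⟺  2 * b^K ≤ (3/2) * a^K ⟺ (4/3) ≤ (a/b)^K
    have haK : (0:ℝ) < a ^ K := by positivity
    rw [div_le_div_iff₀ haK hbK]
    -- 2 * b^K ≤ 3/2 * a^K
    have hab : a / b = 2 - 1/b := by
      rw [hadef, hbdef]
      field_simp
      ring
    set t : ℝ := 1 / K with htdef
    have ht0 : 0 < t := by positivity
    have ht1 : t ≤ 1 := by
      rw [htdef]
      rw [div_le_one (by exact_mod_cast hK)]
      exact_mod_cast hK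
    -- b ≥ (3/2)^t
    have hbt : (3/2 : ℝ) ^ t ≤ b := by
      have h1 : ((3:ℝ)/2) ^ t ≤ (b ^ K) ^ t :=
        Real.rpow_le_rpow (by norm_num) hcase.le ht0.le
      have h2 : (b ^ K : ℝ) ^ t = b := by
        rw [← Real.rpow_natCast b K, ← Real.rpow_mul hbpos.le, htdef]
        rw [mul_one_div, div_self (by exact_mod_cast hK.ne' : (K:ℝ) ≠ 0), Real.rpow_one]
      rwa [h2] at h1
    -- 1/b ≤ (2/3)^t
    have hinvb : 1 / b ≤ (2/3 : ℝ) ^ t := by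
      have h23 : ((2:ℝ)/3) ^ t = (((3:ℝ)/2) ^ t)⁻¹ := by
        rw [← Real.inv_rpow (by norm_num)]; norm_num
      rw [h23, div_eq_inv_mul, mul_one]
      exact inv_anti₀ (by positivity) hbt
    -- (4/3)^t ≤ 2 - 1/b
    have h43 : ((4:ℝ)/3) ^ t ≤ 2 - 1/b := by
      have b1 := bernoulli_rpow (by norm_num : (0:ℝ) < 2/3) ht0.le ht1
      have : ((4:ℝ)/3) ^ t ≤ 1 + t * (4/3 - 1) :=
        bernoulli_rpow (by norm_num) ht0.le ht1
      nlinarith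
    -- conclude
    have hfinal : (4/3 : ℝ) ≤ (2 - 1/b) ^ K := by
      have h2b : (0:ℝ) ≤ (4:ℝ)/3 := by norm_num
      have hpow : (((4:ℝ)/3) ^ t) ^ K ≤ (2 - 1/b) ^ K :=
        pow_le_pow_left₀ (by positivity) h43 K
      have : (((4:ℝ)/3) ^ t) ^ K = 4/3 := by
        rw [← Real.rpow_natCast (((4:ℝ)/3) ^ t) K, ← Real.rpow_mul (by norm_num), htdef]
        rw [one_div, inv_mul_cancel₀ (by exact_mod_cast hK.ne' : (K:ℝ) ≠ 0), Real.rpow_one]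
      linarith [hpow, this ▸ hpow]
    have habK : (2 - 1/b) ^ K = a ^ K / b ^ K := by
      rw [← hab, div_pow]
    rw [habK, le_div_iff₀ hbK] at hfinal
    nlinarith

set_option maxHeartbeats 1000000 in
/-- if `G` is an `s`-subexponential prior on `[0,∞)` and `Y ~ f_G`, then
for every `K ≥ 0`, `P[Y ≥ K] ≤ (3/2) e^{-K log(1+1/(2s))}`. -/
theorem tail_poisson_mixture_subexp (s : ℝ) (hs : 0 < s)
    (G : Measure ℝ) [IsProbabilityMeasure G] (hsupp : ∀ᵐ θ ∂G, 0 ≤ θ)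
    (htail : ∀ t : ℝ, 0 < t → G {θ | t ≤ θ} ≤ ENNReal.ofReal (2 * Real.exp (-t / s)))
    (K : ℕ) :
    ∑' y : {y : ℕ // K ≤ y}, mixturePdf G y
      ≤ (3 / 2) * Real.exp (-(K : ℝ) * Real.log (1 + 1 / (2 * s))) := by
  have hbpos : (0:ℝ) < 1 + 1/(2*s) := by positivity
  have haspos : (0:ℝ) < 1 + 1/s := by positivity
  have hRHS : (3/2 : ℝ) * Real.exp (-(K:ℝ) * Real.log (1 + 1/(2*s)))
      = (3/2) / (1 + 1/(2*s))^K := by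
    rw [show -(K:ℝ) * Real.log (1+1/(2*s)) = (K:ℝ) * (-Real.log (1+1/(2*s))) by ring,
        Real.exp_nat_mul, Real.exp_neg, Real.exp_log hbpos, inv_pow]
    ring
  rw [hRHS]
  refine le_trans ?_ (key_ineq s hs K)
  -- measure-theoretic core
  have hml : ∀ y, Measurable fun θ => ENNReal.ofReal (poissonPdf θ y) :=
    fun y => (poissonPdf_measurable y).ennreal_ofReal
  have hpdf_le_one : ∀ {θ:ℝ}, 0 ≤ θ → ∀ y, poissonPdf θ y ≤ 1 := by
    intro θ hθ y
    have h := (summable_poissonPdf θ).le_tsum y (fun j _ => poissonPdf_nonneg hθ j)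
    rwa [tsum_poissonPdf] at h
  have hpμ_le : ∀ y : ℕ, (∫⁻ θ, ENNReal.ofReal (poissonPdf θ y) ∂G) ≤ 1 := by
    intro y
    calc (∫⁻ θ, ENNReal.ofReal (poissonPdf θ y) ∂G) ≤ ∫⁻ _, 1 ∂G :=
        lintegral_mono_ae (hsupp.mono fun θ hθ => by
          simpa [ENNReal.ofReal_le_one] using hpdf_le_one hθ y)
      _ = 1 := by simp
  have hmix : ∀ y, mixturePdf G y = (∫⁻ θ, ENNReal.ofReal (poissonPdf θ y) ∂G).toReal := fun y =>
    integral_eq_lintegral_of_nonneg_ae (hsupp.mono fun θ hθ => poissonPdf_nonneg hθ y)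
      (poissonPdf_measurable y).aestronglyMeasurable
  have hLHS : ∑' y : {y : ℕ // K ≤ y}, mixturePdf G y
      = (∫⁻ θ, ENNReal.ofReal (∑' i : ℕ, poissonPdf θ (i + K)) ∂G).toReal := by
    have e1 : ∑' y : {y : ℕ // K ≤ y}, mixturePdf G y
        = ∑' y : {y : ℕ // K ≤ y}, (∫⁻ θ, ENNReal.ofReal (poissonPdf θ y.1) ∂G).toReal :=
      tsum_congr fun y => hmix y.1
    have e2 : (∑' y : {y : ℕ // K ≤ y}, ∫⁻ θ, ENNReal.ofReal (poissonPdf θ y.1) ∂G).toReal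
        = ∑' y : {y : ℕ // K ≤ y}, (∫⁻ θ, ENNReal.ofReal (poissonPdf θ y.1) ∂G).toReal :=
      ENNReal.tsum_toReal_eq fun y => ne_top_of_le_ne_top ENNReal.one_ne_top (hpμ_le y.1)
    have e3 : (∑' y : {y : ℕ // K ≤ y}, ∫⁻ θ, ENNReal.ofReal (poissonPdf θ y.1) ∂G)
        = ∫⁻ θ, ∑' y : {y : ℕ // K ≤ y}, ENNReal.ofReal (poissonPdf θ y.1) ∂G :=
      (lintegral_tsum (f := fun (y : {y : ℕ // K ≤ y}) (θ : ℝ) => ENNReal.ofReal (poissonPdf θ y.1)) (fun y => (hml y.1).aemeasurable)).symm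
    have e4 : (∫⁻ θ, ∑' y : {y : ℕ // K ≤ y}, ENNReal.ofReal (poissonPdf θ y.1) ∂G)
        = ∫⁻ θ, ENNReal.ofReal (∑' i : ℕ, poissonPdf θ (i + K)) ∂G := by
      refine lintegral_congr_ae (hsupp.mono fun θ hθ => ?_)
      have hsub : Summable (fun y : {y : ℕ // K ≤ y} => poissonPdf θ y.1) :=
        (summable_poissonPdf θ).subtype {y | K ≤ y}
      show (∑' y : {y : ℕ // K ≤ y}, ENNReal.ofReal (poissonPdf θ y.1))
          = ENNReal.ofReal (∑' i : ℕ, poissonPdf θ (i + K))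
      rw [← ENNReal.ofReal_tsum_of_nonneg (fun y => poissonPdf_nonneg hθ _) hsub,
          tsum_subtype_eq K (poissonPdf θ)]
    rw [e1, ← e2, e3, e4]
  rw [hLHS]
  set S : ℝ≥0∞ := ∫⁻ θ, ENNReal.ofReal (∑' i : ℕ, poissonPdf θ (i + K)) ∂G with hSdef
  have hS1 : S ≤ 1 := by
    have hptle : ∀ᵐ θ ∂G, ENNReal.ofReal (∑' i : ℕ, poissonPdf θ (i + K)) ≤ (1:ℝ≥0∞) := by
      refine hsupp.mono fun θ hθ => ?_
      rw [tail_eq_sub]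
      have hF : 0 ≤ ∑ y ∈ Finset.range K, poissonPdf θ y :=
        Finset.sum_nonneg fun y _ => poissonPdf_nonneg hθ y
      calc ENNReal.ofReal (1 - ∑ y ∈ Finset.range K, poissonPdf θ y)
          ≤ ENNReal.ofReal 1 := ENNReal.ofReal_le_ofReal (by linarith)
        _ = 1 := ENNReal.ofReal_one
    calc S ≤ ∫⁻ _, 1 ∂G := lintegral_mono_ae hptle
      _ = 1 := by simp
  have hS1' : S.toReal ≤ 1 :=
    ENNReal.toReal_le_of_le_ofReal zero_le_one (by simpa using hS1)
  refine le_min hS1' ?_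
  rcases Nat.eq_zero_or_pos K with h0 | hKpos
  · rw [h0]; simpa using le_trans hS1' one_le_two
  obtain ⟨m, rfl⟩ : ∃ m, K = m + 1 := ⟨K-1, (Nat.succ_pred_eq_of_pos hKpos).symm⟩
  set r : ℝ := 1 + 1/s with hrdef
  have hrpos : 0 < r := haspos
  set A : Set (ℝ × ℝ) := {q : ℝ × ℝ | 0 < q.2 ∧ q.2 ≤ q.1} with hA
  have hAmeas : MeasurableSet A := by
    rw [hA]
    exact (measurableSet_lt measurable_const measurable_snd).inter
      (measurableSet_le measurable_snd measurable_fst)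
  have hFmeas : Measurable fun q : ℝ × ℝ => A.indicator
      (fun q : ℝ × ℝ => ENNReal.ofReal (poissonPdf q.2 m)) q :=
    Measurable.indicator ((hml m).comp measurable_snd) hAmeas
  have hpt : ∀ θ:ℝ, 0 ≤ θ → ENNReal.ofReal (∑' i : ℕ, poissonPdf θ (i + (m+1)))
      = ∫⁻ t, A.indicator (fun q : ℝ × ℝ => ENNReal.ofReal (poissonPdf q.2 m)) (θ, t) ∂volume := by
    intro θ hθ
    have h1 : ∑' i : ℕ, poissonPdf θ (i + (m+1)) = ∫ t in (0:ℝ)..θ, poissonPdf t m := by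
      rw [tail_eq_sub, integral_poisson_tail m hθ]
    have hint : IntegrableOn (fun t => poissonPdf t m) (Set.Ioc 0 θ) volume := by
      apply Continuous.integrableOn_Ioc
      unfold poissonPdf
      continuity
    have hnn : 0 ≤ᵐ[volume.restrict (Set.Ioc 0 θ)] fun t => poissonPdf t m :=
      (ae_restrict_iff' measurableSet_Ioc).2 (ae_of_all _ fun t ht => poissonPdf_nonneg ht.1.le m)
    rw [h1, intervalIntegral.integral_of_le hθ,
        MeasureTheory.ofReal_integral_eq_lintegral_ofReal hint hnn,
        ← lintegral_indicator measurableSet_Ioc _]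
    refine lintegral_congr fun t => ?_
    simp only [Set.indicator_apply, Set.mem_Ioc, hA, Set.mem_setOf_eq]
  have hSwap : S = ∫⁻ t, ∫⁻ θ, A.indicator
      (fun q : ℝ × ℝ => ENNReal.ofReal (poissonPdf q.2 m)) (θ, t) ∂G ∂volume := by
    rw [hSdef, lintegral_congr_ae (hsupp.mono fun θ hθ => hpt θ hθ)]
    exact lintegral_lintegral_swap hFmeas.aemeasurable
  have hinner : ∀ t : ℝ, (∫⁻ θ, A.indicator
      (fun q : ℝ × ℝ => ENNReal.ofReal (poissonPdf q.2 m)) (θ, t) ∂G)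
      = Set.indicator (Set.Ioi 0)
          (fun t => ENNReal.ofReal (poissonPdf t m) * G {θ | t ≤ θ}) t := by
    intro t
    by_cases ht : 0 < t
    · have hptw : ∀ θ:ℝ, A.indicator
          (fun q : ℝ × ℝ => ENNReal.ofReal (poissonPdf q.2 m)) (θ, t)
          = Set.indicator {θ : ℝ | t ≤ θ} (fun _ => ENNReal.ofReal (poissonPdf t m)) θ := by
        intro θ
        simp only [Set.indicator_apply, hA, Set.mem_setOf_eq]
        by_cases h2 : t ≤ θ <;> simp [h2, ht]
      simp_rw [hptw]
      rw [lintegral_indicator_const (show MeasurableSet {θ:ℝ | t ≤ θ} from measurableSet_Ici),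
          Set.indicator_of_mem (Set.mem_Ioi.2 ht)]
    · have hptw : ∀ θ:ℝ, A.indicator
          (fun q : ℝ × ℝ => ENNReal.ofReal (poissonPdf q.2 m)) (θ, t) = 0 := by
        intro θ
        exact Set.indicator_of_notMem (fun h => ht h.1) _
      simp_rw [hptw]
      rw [lintegral_zero, Set.indicator_of_notMem (by simpa using ht)]
  -- the Gamma integral
  have hg : (fun t : ℝ => poissonPdf t m * (2 * Real.exp (-t/s)))
      = fun t : ℝ => (2/(m.factorial:ℝ)) * (t ^ ((m:ℝ)+1-1) * Real.exp (-(r * t))) := by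
    funext t
    have harg : -(r * t) = -t + -t/s := by rw [hrdef]; field_simp; ring
    rw [show ((m:ℝ)+1-1) = (m:ℝ) by ring, Real.rpow_natCast, harg, Real.exp_add]
    unfold poissonPdf
    ring
  have hgint : IntegrableOn (fun t : ℝ => poissonPdf t m * (2 * Real.exp (-t/s)))
      (Set.Ioi 0) volume := by
    rw [hg]
    apply Integrable.const_mul
    have h := integrableOn_rpow_mul_exp_neg_mul_rpow
      (s := (m:ℝ)) (p := 1) (b := r) (lt_of_lt_of_le (by norm_num) (Nat.cast_nonneg m) : (-1:ℝ) < (m:ℝ)) zero_lt_one hrpos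
    refine h.congr_fun (fun t _ => ?_) measurableSet_Ioi
    dsimp only
    rw [Real.rpow_one, show ((m:ℝ)+1-1) = (m:ℝ) by ring, neg_mul]
  have hgval : ∫ t in Set.Ioi (0:ℝ), poissonPdf t m * (2 * Real.exp (-t/s)) ∂volume
      = 2 / r ^ (m+1) := by
    rw [hg, MeasureTheory.integral_const_mul,
        integral_rpow_mul_exp_neg_mul_Ioi (by positivity : (0:ℝ) < (m:ℝ)+1) hrpos,
        Real.Gamma_nat_eq_factorial,
        show ((m:ℝ)+1) = (((m+1:ℕ)):ℝ) by push_cast; ring,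
        Real.rpow_natCast, div_pow, one_pow]
    have hfac : (0:ℝ) < (m.factorial : ℝ) := by positivity
    have hrK : (0:ℝ) < r ^ (m+1) := by positivity
    field_simp
  -- chain of bounds
  have hS2 : S ≤ ENNReal.ofReal (2 / r ^ (m+1)) := by
    rw [hSwap]
    have step1 : ∀ t : ℝ, (∫⁻ θ, A.indicator
        (fun q : ℝ × ℝ => ENNReal.ofReal (poissonPdf q.2 m)) (θ, t) ∂G)
        ≤ Set.indicator (Set.Ioi 0)
            (fun t => ENNReal.ofReal (poissonPdf t m * (2 * Real.exp (-t/s)))) t := by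
      intro t
      rw [hinner t]
      by_cases ht : t ∈ Set.Ioi 0
      · rw [Set.indicator_of_mem ht, Set.indicator_of_mem ht]
        rw [ENNReal.ofReal_mul (poissonPdf_nonneg (le_of_lt ht) m)]
        exact mul_le_mul_right (htail t ht) _
      · rw [Set.indicator_of_notMem ht, Set.indicator_of_notMem ht]
    calc (∫⁻ t, ∫⁻ θ, A.indicator
          (fun q : ℝ × ℝ => ENNReal.ofReal (poissonPdf q.2 m)) (θ, t) ∂G ∂volume)
        ≤ ∫⁻ t, Set.indicator (Set.Ioi 0)
            (fun t => ENNReal.ofReal (poissonPdf t m * (2 * Real.exp (-t/s)))) t ∂volume :=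
          lintegral_mono step1
      _ = ∫⁻ t in Set.Ioi 0, ENNReal.ofReal (poissonPdf t m * (2 * Real.exp (-t/s))) ∂volume := by
          rw [lintegral_indicator measurableSet_Ioi _]
      _ = ENNReal.ofReal (∫ t in Set.Ioi (0:ℝ), poissonPdf t m * (2 * Real.exp (-t/s)) ∂volume) := by
          rw [MeasureTheory.ofReal_integral_eq_lintegral_ofReal hgint
            ((ae_restrict_iff' measurableSet_Ioi).2 (ae_of_all _ fun t ht =>
              mul_nonneg (poissonPdf_nonneg (le_of_lt ht) m) (by positivity)))]
      _ = ENNReal.ofReal (2 / r ^ (m+1)) := by rw [hgval]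
  exact ENNReal.toReal_le_of_le_ofReal (by positivity) hS2
end

section
/- For a prior G supported on [0,h] and any integer K ≥ ⌈2(2+he) log n / log log n⌉ with n ≥ 3, the Poisson mixture tail satisfies ε_K(G) = P_{Y~f_G}[Y ≥ K] ≤ 2/n². -/
open MeasureTheory Real

lemma aux_pow_div_factorial_le_exp (x : ℝ) (hx : 0 ≤ x) (k : ℕ) :
    x ^ k / (Nat.factorial k) ≤ Real.exp x := by
  have hexp : Real.exp x = ∑' n : ℕ, x ^ n / (Nat.factorial n) := by
    rw [Real.exp_eq_exp_ℝ, NormedSpace.exp_eq_tsum_div]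
  rw [hexp]
  exact Summable.le_tsum (Real.summable_pow_div_factorial x) k (fun j _ =>
    div_nonneg (pow_nonneg hx j) (by positivity))

lemma aux_log_le_half (t : ℝ) (ht : 0 < t) : Real.log t ≤ t / 2 := by
  have h1 : Real.log t = 2 * Real.log (Real.sqrt t) := by
    rw [Real.log_sqrt ht.le]; ring
  have h2 : Real.log (Real.sqrt t) ≤ Real.sqrt t - 1 :=
    Real.log_le_sub_one_of_pos (Real.sqrt_pos.2 ht)
  have h3 : Real.sqrt t ^ 2 = t := Real.sq_sqrt ht.le
  nlinarith [Real.sqrt_nonneg t, sq_nonneg (Real.sqrt t - 2)]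

lemma aux_mixture_le (h : ℝ) (hh : 0 < h) (G : Measure ℝ) [IsProbabilityMeasure G]
    (hsupp : ∀ᵐ θ ∂G, θ ∈ Set.Icc 0 h) (y : ℕ) :
    mixturePdf G y ≤ h ^ y / (Nat.factorial y) := by
  have hb : 0 ≤ h ^ y / (Nat.factorial y : ℝ) := by positivity
  by_cases hint : Integrable (fun θ => poissonPdf θ y) G
  · have hle : ∀ᵐ θ ∂G, poissonPdf θ y ≤ h ^ y / (Nat.factorial y) := by
      filter_upwards [hsupp] with θ hθ
      obtain ⟨h0, h1⟩ := hθ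
      unfold poissonPdf
      have hnum : Real.exp (-θ) * θ ^ y ≤ h ^ y := by
        calc Real.exp (-θ) * θ ^ y ≤ 1 * θ ^ y :=
              mul_le_mul_of_nonneg_right (Real.exp_le_one_iff.2 (by linarith))
                (pow_nonneg h0 y)
          _ = θ ^ y := one_mul _
          _ ≤ h ^ y := pow_le_pow_left₀ h0 h1 y
      exact div_le_div_of_nonneg_right hnum (by positivity)
    calc mixturePdf G y ≤ ∫ _, h ^ y / (Nat.factorial y : ℝ) ∂G :=
          integral_mono_ae hint (integrable_const _) hle
      _ = h ^ y / (Nat.factorial y : ℝ) := by simp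
  · unfold mixturePdf
    rw [integral_undef hint]
    exact hb

lemma aux_mixture_nonneg (h : ℝ) (G : Measure ℝ) [IsProbabilityMeasure G]
    (hsupp : ∀ᵐ θ ∂G, θ ∈ Set.Icc 0 h) (y : ℕ) : 0 ≤ mixturePdf G y := by
  apply integral_nonneg_of_ae
  filter_upwards [hsupp] with θ hθ
  obtain ⟨h0, _⟩ := hθ
  unfold poissonPdf
  positivity

/-- for a prior `G` supported on `[0,h]`, `n ≥ 3` and any integer
`K ≥ 2(2+he)·log n / log log n`, the Poisson mixture tail satisfies
`ε_K(G) = P_{Y~f_G}[Y ≥ K] ≤ 2/n²`. -/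
theorem tail_bound_for_bounded_prior (h : ℝ) (hh : 0 < h)
    (G : Measure ℝ) [IsProbabilityMeasure G] (hsupp : ∀ᵐ θ ∂G, θ ∈ Set.Icc 0 h)
    (n : ℕ) (hn : 3 ≤ n) (K : ℕ)
    (hK : 2 * (2 + h * Real.exp 1) * Real.log n / Real.log (Real.log n) ≤ K) :
    ∑' y : {y : ℕ // K ≤ y}, mixturePdf G y ≤ 2 / (n : ℝ) ^ 2 := by
  have hsummable : Summable (fun y : ℕ => h ^ y / (Nat.factorial y) : ℕ → ℝ) :=
    Real.summable_pow_div_factorial h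
  have hsum_sub : Summable (fun y : {y : ℕ // K ≤ y} => h ^ (y : ℕ) / (Nat.factorial y)) :=
    hsummable.subtype _
  have hmix_summ : Summable (fun y : {y : ℕ // K ≤ y} => mixturePdf G y) :=
    Summable.of_nonneg_of_le (fun y => aux_mixture_nonneg h G hsupp y)
      (fun y => aux_mixture_le h hh G hsupp y) hsum_sub
  have step1 : ∑' y : {y : ℕ // K ≤ y}, mixturePdf G y
      ≤ ∑' y : {y : ℕ // K ≤ y}, h ^ (y : ℕ) / (Nat.factorial y) :=
    Summable.tsum_le_tsum (fun y => aux_mixture_le h hh G hsupp y) hmix_summ hsum_sub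
  have step2 : ∑' y : {y : ℕ // K ≤ y}, h ^ (y : ℕ) / (Nat.factorial y)
      = ∑' j : ℕ, h ^ (K + j) / (Nat.factorial (K + j)) := by
    rw [← Equiv.tsum_eq
      (⟨fun j => ⟨K + j, Nat.le_add_right _ _⟩, fun y => (y : ℕ) - K,
        fun j => by simp, fun y => by simp [Nat.add_sub_cancel' y.2]⟩ :
        ℕ ≃ {y : ℕ // K ≤ y})]
    rfl
  have hterm : ∀ j : ℕ, h ^ (K + j) / (Nat.factorial (K + j))
      ≤ (h ^ K / Nat.factorial K) * (h ^ j / Nat.factorial j) := by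
    intro j
    have hfac : (Nat.factorial K * Nat.factorial j : ℝ) ≤ (Nat.factorial (K + j) : ℝ) := by
      exact_mod_cast Nat.le_of_dvd (Nat.factorial_pos _)
        (Nat.factorial_mul_factorial_dvd_factorial_add K j)
    have hfacpos : (0:ℝ) < Nat.factorial K * Nat.factorial j := by positivity
    rw [pow_add, div_mul_div_comm]
    exact div_le_div_of_nonneg_left (by positivity) hfacpos hfac |>.trans_eq rfl
  have step3 : ∑' j : ℕ, h ^ (K + j) / (Nat.factorial (K + j))
      ≤ (h ^ K / Nat.factorial K) * Real.exp h := by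
    have hexp : Real.exp h = ∑' j : ℕ, h ^ j / (Nat.factorial j) := by
      rw [Real.exp_eq_exp_ℝ, NormedSpace.exp_eq_tsum_div]
    rw [hexp, ← tsum_mul_left]
    exact Summable.tsum_le_tsum hterm (hsummable.comp_injective (add_right_injective K))
      (hsummable.mul_left _)
  -- numeric part
  set L := Real.log n with hLdef
  have hL1 : 1 < L := by
    have he3 : Real.exp 1 < 3 := by
      have := Real.exp_one_lt_d9; linarith
    have h3 : (3 : ℝ) ≤ (n : ℝ) := by exact_mod_cast hn
    rw [hLdef, show (1:ℝ) = Real.log (Real.exp 1) by simp]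
    exact Real.log_lt_log (Real.exp_pos 1) (by linarith)
  have hlogL : 0 < Real.log L := Real.log_pos hL1
  set c := 2 + h * Real.exp 1 with hcdef
  have he1 : (1 : ℝ) ≤ Real.exp 1 := Real.one_le_exp (by norm_num)
  have hhe : 0 < h * Real.exp 1 := by positivity
  have hc : h * Real.exp 1 < c := by rw [hcdef]; linarith
  have hc2 : 2 ≤ c := by nlinarith
  have hKr : 2 * c * L / Real.log L ≤ (K : ℝ) := hK
  have hKpos : 0 < (K : ℝ) :=
    lt_of_lt_of_le (div_pos (by nlinarith) hlogL) hKr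
  -- Stirling-type bound: h^K/K! ≤ (h e / K)^K
  have hstir : h ^ K / (Nat.factorial K : ℝ) ≤ (h * Real.exp 1 / K) ^ K := by
    have hKK : (K : ℝ) ^ K / (Nat.factorial K : ℝ) ≤ Real.exp K :=
      aux_pow_div_factorial_le_exp K (by positivity) K
    have hfacpos : (0:ℝ) < Nat.factorial K := by exact_mod_cast Nat.factorial_pos K
    have hKKpos : (0:ℝ) < (K:ℝ) ^ K := pow_pos hKpos K
    have hfacge : (K : ℝ) ^ K ≤ Nat.factorial K * Real.exp K := by
      rw [div_le_iff₀ hfacpos] at hKK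
      linarith
    have hrw : (h * Real.exp 1 / K) ^ K = h ^ K * Real.exp K / (K : ℝ) ^ K := by
      rw [div_pow, mul_pow, ← Real.exp_nat_mul, mul_one]
    rw [hrw, div_le_div_iff₀ hfacpos hKKpos]
    calc h ^ K * (K:ℝ) ^ K ≤ h ^ K * (Nat.factorial K * Real.exp K) :=
          mul_le_mul_of_nonneg_left hfacge (by positivity)
      _ = h ^ K * Real.exp (K:ℝ) * Nat.factorial K := by ring
  -- key log inequality
  have hKlog : 2 * L + h ≤ (K : ℝ) * Real.log ((K:ℝ) / (h * Real.exp 1)) := by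
    have hlogLlehalf : Real.log L ≤ L / 2 := aux_log_le_half L (by linarith)
    have hloglogL : Real.log (Real.log L) ≤ Real.log L / 2 := aux_log_le_half _ hlogL
    have hratio : 2 * L / Real.log L ≤ (K : ℝ) / (h * Real.exp 1) := by
      rw [le_div_iff₀ hhe]
      calc 2 * L / Real.log L * (h * Real.exp 1) ≤ 2 * L / Real.log L * c :=
            mul_le_mul_of_nonneg_left hc.le (div_nonneg (by nlinarith) hlogL.le)
        _ = 2 * c * L / Real.log L := by ring
        _ ≤ (K : ℝ) := hKr
    have hratio_pos : (0:ℝ) < 2 * L / Real.log L := div_pos (by linarith) hlogL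
    have hlog2L : Real.log (2 * L / Real.log L) = Real.log 2 + Real.log L - Real.log (Real.log L) := by
      rw [Real.log_div (by positivity) (ne_of_gt hlogL), Real.log_mul (by norm_num) (by linarith)]
    have hlogK : Real.log L / 2 ≤ Real.log ((K:ℝ) / (h * Real.exp 1)) := by
      have hmono : Real.log (2 * L / Real.log L) ≤ Real.log ((K:ℝ) / (h * Real.exp 1)) :=
        Real.log_le_log hratio_pos hratio
      have hlog2 : (0:ℝ) ≤ Real.log 2 := Real.log_nonneg (by norm_num)
      rw [hlog2L] at hmono
      linarith
    calc 2 * L + h ≤ c * L := by nlinarith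
      _ = (2 * c * L / Real.log L) * (Real.log L / 2) := by
          field_simp
      _ ≤ (K : ℝ) * (Real.log L / 2) :=
          mul_le_mul_of_nonneg_right hKr (by linarith)
      _ ≤ (K : ℝ) * Real.log ((K:ℝ) / (h * Real.exp 1)) :=
          mul_le_mul_of_nonneg_left hlogK hKpos.le
  -- final bound: (h e / K)^K * exp h ≤ 2/n²
  have hnpos : (0:ℝ) < (n:ℝ) := by positivity
  have hfinal : (h * Real.exp 1 / K) ^ K * Real.exp h ≤ 2 / (n:ℝ)^2 := by
    have hbase : (0:ℝ) < h * Real.exp 1 / K := div_pos hhe hKpos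
    have hpowlog : (h * Real.exp 1 / K) ^ K = Real.exp ((K:ℝ) * Real.log (h * Real.exp 1 / K)) := by
      rw [← Real.log_pow, Real.exp_log (pow_pos hbase K)]
    have hloginv : Real.log (h * Real.exp 1 / K) = - Real.log ((K:ℝ) / (h * Real.exp 1)) := by
      rw [← Real.log_inv, inv_div]
    have : (h * Real.exp 1 / K) ^ K * Real.exp h = Real.exp (h - (K:ℝ) * Real.log ((K:ℝ)/(h * Real.exp 1))) := by
      rw [hpowlog, ← Real.exp_add, hloginv]; ring_nf
    rw [this]
    have hle : Real.exp (h - (K:ℝ) * Real.log ((K:ℝ)/(h * Real.exp 1))) ≤ Real.exp (-(2*L)) :=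
      Real.exp_le_exp.2 (by linarith)
    have hexp2L : Real.exp (-(2*L)) = 1 / (n:ℝ)^2 := by
      rw [Real.exp_neg, hLdef]
      rw [show (2:ℝ) * Real.log n = Real.log ((n:ℝ)^2) by rw [Real.log_pow]; push_cast; ring]
      rw [Real.exp_log (by positivity)]
      rw [one_div]
    calc Real.exp (h - (K:ℝ) * Real.log ((K:ℝ)/(h * Real.exp 1))) ≤ 1/(n:ℝ)^2 := by
          rw [← hexp2L]; exact hle
      _ ≤ 2/(n:ℝ)^2 := by gcongr; norm_num
  calc ∑' y : {y : ℕ // K ≤ y}, mixturePdf G y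
      ≤ ∑' y : {y : ℕ // K ≤ y}, h ^ (y : ℕ) / (Nat.factorial y) := step1
    _ = ∑' j : ℕ, h ^ (K + j) / (Nat.factorial (K + j)) := step2
    _ ≤ (h ^ K / Nat.factorial K) * Real.exp h := step3
    _ ≤ (h * Real.exp 1 / K) ^ K * Real.exp h :=
        mul_le_mul_of_nonneg_right hstir (Real.exp_pos h).le
    _ ≤ 2 / (n : ℝ) ^ 2 := hfinal
end
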